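/- arXiv:2402.19074 — 5 statements merged into one kernel-verified Lean document; each statement's English description precedes it below -/
import Mathlib

section
/- Let G be a compact metrizable topological group, T : G → G a continuous group homomorphism, and μ, ν ∈ M(T). If h_μ(T) < ∞, then h_ν(T) ≤ h_{μ*ν}(T); likewise, if h_ν(T) < ∞, then h_μ(T) ≤ h_{μ*ν}(T). -/
open MeasureTheory Filter
open scoped ENNReal

/-- The Shannon entropy of a finite-valued measurable observable (i.e. of the finite
measurable partition it induces) with respect to a measure `μ`. -/
noncomputable def partitionEntropy {X : Type*} [MeasurableSpace X] (μ : Measure X)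
    {ι : Type*} [Fintype ι] (f : X → ι) : ℝ :=
  ∑ i, Real.negMulLog (μ (f ⁻¹' {i})).toReal

/-- The entropy of the join `⋁_{i=0}^{n-1} T⁻ⁱ α` of the partition induced by `f`
along the first `n` iterates of `T`. -/
noncomputable def processEntropy {X : Type*} [MeasurableSpace X] (μ : Measure X)
    (T : X → X) {ι : Type*} [Fintype ι] (f : X → ι) (n : ℕ) : ℝ :=
  partitionEntropy μ (fun x => fun i : Fin n => f (T^[(i : ℕ)] x))

/-- The Kolmogorov–Sinai (measure-theoretic) entropy of `T` with respect to `μ`: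
the supremum over all finite measurable partitions (encoded as measurable maps into
`Fin k`) of the asymptotic entropy rate of the induced process. -/
noncomputable def ksEntropy {X : Type*} [MeasurableSpace X] (μ : Measure X)
    (T : X → X) : ℝ≥0∞ :=
  ⨆ (k : ℕ) (f : X → Fin k) (_ : Measurable f),
    Filter.limsup (fun n : ℕ => ENNReal.ofReal (processEntropy μ T f n / n)) Filter.atTop

set_option linter.unusedSectionVars false
set_option linter.unusedVariables false
set_option maxHeartbeats 1000000

open Real Topology

set_option linter.unusedSectionVars false


section KL

/-- Gibbs-type inequality. -/
lemma klsum {ι : Type*} (s : Finset ι) (a b : ι → ℝ) (ha : ∀ t ∈ s, 0 ≤ a t)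
    (hb : ∀ t ∈ s, 0 ≤ b t) (hab : ∀ t ∈ s, a t ≠ 0 → b t ≠ 0)
    (hsum : ∑ t ∈ s, b t ≤ ∑ t ∈ s, a t) :
    ∑ t ∈ s, a t * Real.log (b t) ≤ ∑ t ∈ s, a t * Real.log (a t) := by
  have key : ∀ t ∈ s, a t * Real.log (b t) - a t * Real.log (a t) ≤ b t - a t := by
    intro t ht
    rcases eq_or_lt_of_le (ha t ht) with h0 | h0
    · simp [← h0, (hb t ht)]
    · have hbt : 0 < b t := lt_of_le_of_ne (hb t ht) (Ne.symm (hab t ht h0.ne'))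
      have hlog : Real.log (b t) - Real.log (a t) = Real.log (b t / a t) :=
        (Real.log_div hbt.ne' h0.ne').symm
      have hle : Real.log (b t / a t) ≤ b t / a t - 1 :=
        Real.log_le_sub_one_of_pos (div_pos hbt h0)
      have : a t * (Real.log (b t) - Real.log (a t)) ≤ a t * (b t / a t - 1) := by
        rw [hlog]; exact mul_le_mul_of_nonneg_left hle h0.le
      calc a t * Real.log (b t) - a t * Real.log (a t)
          = a t * (Real.log (b t) - Real.log (a t)) := by ring
        _ ≤ a t * (b t / a t - 1) := this
        _ = b t - a t := by field_simp
  have h1 : ∑ t ∈ s, (a t * Real.log (b t) - a t * Real.log (a t)) ≤ ∑ t ∈ s, (b t - a t) :=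
    Finset.sum_le_sum key
  rw [Finset.sum_sub_distrib, Finset.sum_sub_distrib] at h1
  linarith

lemma negMulLog_sum_le {ι : Type*} (s : Finset ι) (a : ι → ℝ) (ha : ∀ t ∈ s, 0 ≤ a t) :
    Real.negMulLog (∑ t ∈ s, a t) ≤ ∑ t ∈ s, Real.negMulLog (a t) := by
  have hS : Real.negMulLog (∑ t ∈ s, a t) = ∑ t ∈ s, -(a t) * Real.log (∑ t ∈ s, a t) := by
    rw [Real.negMulLog, ← Finset.sum_mul, ← Finset.sum_neg_distrib]
  rw [hS]
  refine Finset.sum_le_sum ?_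
  intro t ht
  rcases eq_or_lt_of_le (ha t ht) with h0 | h0
  · simp [← h0]
  · have hle : Real.log (a t) ≤ Real.log (∑ t ∈ s, a t) :=
      Real.log_le_log h0 (Finset.single_le_sum ha ht)
    have : -(a t) * Real.log (∑ t ∈ s, a t) ≤ -(a t) * Real.log (a t) := by
      apply mul_le_mul_of_nonpos_left hle (by linarith)
    simpa [Real.negMulLog] using this

end KL

section Part

/-- An observable with measurable fibers. -/
def Mble {X ι : Type*} [MeasurableSpace X] (f : X → ι) : Prop :=
  ∀ i, MeasurableSet (f ⁻¹' {i})

/-- Probability weight of a fiber. -/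
noncomputable def pw {X ι : Type*} [MeasurableSpace X] (μ : Measure X) (f : X → ι) (i : ι) : ℝ :=
  (μ (f ⁻¹' {i})).toReal

variable {X : Type*} [MeasurableSpace X] {μ : Measure X} [IsProbabilityMeasure μ]
variable {ι κ : Type*} [Fintype ι] [Fintype κ]

lemma Mble.comp {f : X → ι} (hf : Mble f) (g : ι → κ) : Mble (g ∘ f) := by
  intro j
  classical
  have : (g ∘ f) ⁻¹' {j} = ⋃ i ∈ {i : ι | g i = j}, f ⁻¹' {i} := by
    ext x; simp [Set.mem_iUnion]
  rw [this]
  exact MeasurableSet.biUnion (Set.to_countable _) (fun i _ => hf i)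

lemma pw_nonneg {f : X → ι} {i : ι} : 0 ≤ pw μ f i := ENNReal.toReal_nonneg

lemma pw_le_one {f : X → ι} {i : ι} : pw μ f i ≤ 1 := by
  have h := prob_le_one (μ := μ) (s := f ⁻¹' {i})
  simpa [pw] using ENNReal.toReal_mono ENNReal.one_ne_top h

lemma sum_pw_fiber [DecidableEq κ] {f : X → ι} (hf : Mble f) (g : ι → κ) (j : κ) :
    ∑ i ∈ Finset.univ.filter (fun i => g i = j), pw μ f i = pw μ (g ∘ f) j := by
  classical
  have hset : (g ∘ f) ⁻¹' {j} = ⋃ i ∈ (Finset.univ.filter (fun i => g i = j) : Finset ι),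
      f ⁻¹' {i} := by
    ext x; simp [Set.mem_iUnion]
  have hdisj : ((Finset.univ.filter (fun i => g i = j) : Finset ι) : Set ι).PairwiseDisjoint
      (fun i => f ⁻¹' {i}) := by
    intro i _ i' _ hne
    exact Set.disjoint_left.2 (fun x hx hx' => hne (by
      simp only [Set.mem_preimage, Set.mem_singleton_iff] at hx hx'; rw [← hx, ← hx']))
  have hm := measure_biUnion_finset (μ := μ) hdisj (fun i _ => hf i)
  rw [pw, hset, hm, ENNReal.toReal_sum (fun i _ => measure_ne_top μ _)]
  rfl

lemma sum_pw {f : X → ι} (hf : Mble f) : ∑ i, pw μ f i = 1 := by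
  classical
  have h := sum_pw_fiber (μ := μ) hf (fun _ => (0 : Fin 1)) 0
  have h2 : pw μ ((fun _ => (0 : Fin 1)) ∘ f) 0 = 1 := by
    have : ((fun (_ : ι) => (0 : Fin 1)) ∘ f) ⁻¹' {0} = Set.univ := by
      ext x; simp [Fin.eq_zero]
    simp [pw, this]
  simpa [Finset.filter_true_of_mem, Fin.eq_zero] using h.trans h2

lemma sum_pw_mul [DecidableEq κ] {f : X → ι} (hf : Mble f) (g : ι → κ) (F : κ → ℝ) :
    ∑ i, pw μ f i * F (g i) = ∑ j, pw μ (g ∘ f) j * F j := by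
  classical
  rw [← Finset.sum_fiberwise (Finset.univ : Finset ι) g (fun i => pw μ f i * F (g i))]
  · refine Finset.sum_congr rfl (fun j _ => ?_)
    have : ∑ i ∈ Finset.univ.filter (fun i => g i = j), pw μ f i * F (g i)
        = ∑ i ∈ Finset.univ.filter (fun i => g i = j), pw μ f i * F j := by
      refine Finset.sum_congr rfl (fun i hi => ?_)
      rw [(Finset.mem_filter.1 hi).2]
    rw [this, ← Finset.sum_mul, sum_pw_fiber hf g j]

lemma pw_le_comp {f : X → ι} (g : ι → κ) (i : ι) : pw μ f i ≤ pw μ (g ∘ f) (g i) := by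
  apply ENNReal.toReal_mono (measure_ne_top μ _)
  apply measure_mono
  intro x hx
  simp only [Set.mem_preimage, Set.mem_singleton_iff] at hx ⊢
  show g (f x) = g i
  rw [hx]

lemma partitionEntropy_eq_neg_sum {f : X → ι} :
    partitionEntropy μ f = -∑ i, pw μ f i * Real.log (pw μ f i) := by
  simp [partitionEntropy, Real.negMulLog, pw, neg_mul, Finset.sum_neg_distrib]

lemma partitionEntropy_nonneg {f : X → ι} : 0 ≤ partitionEntropy μ f := by
  refine Finset.sum_nonneg (fun i _ => Real.negMulLog_nonneg pw_nonneg pw_le_one)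

/-- Entropy does not increase under post-composition. -/
lemma partitionEntropy_comp_le {f : X → ι} (hf : Mble f) (g : ι → κ) :
    partitionEntropy μ (g ∘ f) ≤ partitionEntropy μ f := by
  classical
  have h1 : partitionEntropy μ (g ∘ f)
      = ∑ j, Real.negMulLog (∑ i ∈ Finset.univ.filter (fun i => g i = j), pw μ f i) := by
    refine Finset.sum_congr rfl (fun j _ => ?_)
    rw [sum_pw_fiber hf g j]; rfl
  rw [h1, partitionEntropy]
  rw [← Finset.sum_fiberwise (Finset.univ : Finset ι) g
    (fun i => Real.negMulLog (μ (f ⁻¹' {i})).toReal)]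
  exact Finset.sum_le_sum (fun j _ => negMulLog_sum_le _ _ (fun i _ => pw_nonneg))

/-- Entropy is invariant under injective post-composition. -/
lemma partitionEntropy_comp_inj {f : X → ι} {e : ι → κ} (he : Function.Injective e) :
    partitionEntropy μ (e ∘ f) = partitionEntropy μ f := by
  classical
  have h0 : ∀ j ∈ Finset.univ, j ∉ Finset.univ.image e →
      Real.negMulLog (μ ((e ∘ f) ⁻¹' {j})).toReal = 0 := by
    intro j _ hj
    have : (e ∘ f) ⁻¹' {j} = ∅ := by
      ext x
      simp only [Set.mem_preimage, Set.mem_singleton_iff, Set.mem_empty_iff_false, iff_false]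
      intro h; exact hj (Finset.mem_image.2 ⟨f x, Finset.mem_univ _, h⟩)
    simp [this]
  rw [partitionEntropy, ← Finset.sum_subset (Finset.subset_univ (Finset.univ.image e)) h0,
    Finset.sum_image (fun x _ y _ h => he h)]
  refine Finset.sum_congr rfl (fun i _ => ?_)
  have : (e ∘ f) ⁻¹' {e i} = f ⁻¹' {i} := by
    ext x; simp [he.eq_iff]
  rw [this]

end Part
section Part2

variable {X : Type*} [MeasurableSpace X] {μ : Measure X} [IsProbabilityMeasure μ]
variable {ι κ γ : Type*} [Fintype ι] [Fintype κ] [Fintype γ]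

lemma sum_pw_fst {h : X → ι × κ} (hh : Mble h) (j : κ) :
    ∑ i : ι, pw μ h (i, j) = pw μ (Prod.snd ∘ h) j := by
  classical
  have hset : (Prod.snd ∘ h) ⁻¹' {j} = ⋃ i ∈ (Finset.univ : Finset ι), h ⁻¹' {(i, j)} := by
    ext x
    simp only [Set.mem_preimage, Set.mem_singleton_iff, Set.mem_iUnion, Function.comp_apply]
    constructor
    · intro hx; exact ⟨(h x).1, Finset.mem_univ _, by rw [← hx]⟩
    · rintro ⟨i, _, hx⟩; rw [hx]
  have hdisj : ((Finset.univ : Finset ι) : Set ι).PairwiseDisjoint (fun i => h ⁻¹' {(i, j)}) := by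
    intro i _ i' _ hne
    refine Set.disjoint_left.2 (fun x hx hx' => hne ?_)
    simp only [Set.mem_preimage, Set.mem_singleton_iff] at hx hx'
    rw [hx] at hx'; exact (Prod.mk.injEq .. ▸ hx').1
  have hm := measure_biUnion_finset (μ := μ) hdisj (fun i _ => hh _)
  rw [pw, hset, hm, ENNReal.toReal_sum (fun i _ => measure_ne_top μ _)]
  rfl

lemma sum_pw_snd {h : X → ι × κ} (hh : Mble h) (i : ι) :
    ∑ j : κ, pw μ h (i, j) = pw μ (Prod.fst ∘ h) i := by
  classical
  have key := sum_pw_fst (μ := μ) (h := Prod.swap ∘ h) (fun p => by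
    have : (Prod.swap ∘ h) ⁻¹' {p} = h ⁻¹' {p.swap} := by
      ext x; simp [Prod.ext_iff, and_comm]
    rw [this]; exact hh _) i
  have h1 : ∀ j, pw μ (Prod.swap ∘ h) (j, i) = pw μ h (i, j) := by
    intro j
    have : (Prod.swap ∘ h) ⁻¹' {(j, i)} = h ⁻¹' {(i, j)} := by
      ext x; simp [Prod.ext_iff, and_comm]
    rw [pw, this]; rfl
  have h2 : Prod.snd ∘ (Prod.swap ∘ h) = Prod.fst ∘ h := rfl
  calc ∑ j : κ, pw μ h (i, j) = ∑ j : κ, pw μ (Prod.swap ∘ h) (j, i) :=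
        Finset.sum_congr rfl (fun j _ => (h1 j).symm)
    _ = pw μ (Prod.snd ∘ (Prod.swap ∘ h)) i := key
    _ = pw μ (Prod.fst ∘ h) i := by rw [h2]

/-- Subadditivity of entropy for a pair observable. -/
lemma partitionEntropy_pair_le {f : X → ι × κ} (hf : Mble f) :
    partitionEntropy μ f ≤
      partitionEntropy μ (Prod.fst ∘ f) + partitionEntropy μ (Prod.snd ∘ f) := by
  classical
  set a : ι × κ → ℝ := fun t => pw μ f t with ha_def
  set b : ι × κ → ℝ := fun t => pw μ (Prod.fst ∘ f) t.1 * pw μ (Prod.snd ∘ f) t.2 with hb_def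
  have hsum : ∑ t, b t ≤ ∑ t, a t := by
    have h1 : ∑ t : ι × κ, b t = (∑ i, pw μ (Prod.fst ∘ f) i) * (∑ j, pw μ (Prod.snd ∘ f) j) := by
      rw [Finset.sum_mul_sum, Fintype.sum_prod_type]
    rw [h1, sum_pw (hf.comp _), sum_pw (hf.comp _), sum_pw hf, one_mul]
  have hkey := klsum Finset.univ a b (fun t _ => pw_nonneg)
    (fun t _ => mul_nonneg pw_nonneg pw_nonneg)
    (fun t _ hat => mul_ne_zero
      (fun h => hat (le_antisymm (h ▸ pw_le_comp Prod.fst t) pw_nonneg))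
      (fun h => hat (le_antisymm (h ▸ pw_le_comp Prod.snd t) pw_nonneg)))
    hsum
  have hsplit : ∑ t, a t * Real.log (b t)
      = ∑ t : ι × κ, a t * Real.log (pw μ (Prod.fst ∘ f) t.1)
        + ∑ t : ι × κ, a t * Real.log (pw μ (Prod.snd ∘ f) t.2) := by
    rw [← Finset.sum_add_distrib]
    refine Finset.sum_congr rfl (fun t _ => ?_)
    rcases eq_or_ne (a t) 0 with h0 | h0
    · simp [h0]
    · have h1 : pw μ (Prod.fst ∘ f) t.1 ≠ 0 :=
        fun h => h0 (le_antisymm (h ▸ pw_le_comp Prod.fst t) pw_nonneg)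
      have h2 : pw μ (Prod.snd ∘ f) t.2 ≠ 0 :=
        fun h => h0 (le_antisymm (h ▸ pw_le_comp Prod.snd t) pw_nonneg)
      rw [hb_def]; simp only []
      rw [Real.log_mul h1 h2]; ring
  have hfst : ∑ t : ι × κ, a t * Real.log (pw μ (Prod.fst ∘ f) t.1)
      = ∑ i, pw μ (Prod.fst ∘ f) i * Real.log (pw μ (Prod.fst ∘ f) i) :=
    sum_pw_mul hf Prod.fst (fun i => Real.log (pw μ (Prod.fst ∘ f) i))
  have hsnd : ∑ t : ι × κ, a t * Real.log (pw μ (Prod.snd ∘ f) t.2)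
      = ∑ j, pw μ (Prod.snd ∘ f) j * Real.log (pw μ (Prod.snd ∘ f) j) :=
    sum_pw_mul hf Prod.snd (fun j => Real.log (pw μ (Prod.snd ∘ f) j))
  rw [hsplit, hfst, hsnd] at hkey
  have e1 := partitionEntropy_eq_neg_sum (μ := μ) (f := f)
  have e2 := partitionEntropy_eq_neg_sum (μ := μ) (f := Prod.fst ∘ f)
  have e3 := partitionEntropy_eq_neg_sum (μ := μ) (f := Prod.snd ∘ f)
  have : ∑ t : ι × κ, a t * Real.log (a t) = ∑ t : ι × κ, pw μ f t * Real.log (pw μ f t) := rfl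
  linarith [hkey, this]

/-- Strong subadditivity: `H(f) + H(f₂) ≤ H(f₁₂) + H(f₂₃)` for a triple observable
`f : X → α × (β × γ)` with middle coordinate `β`. -/
lemma partitionEntropy_strong {f : X → ι × κ × γ} (hf : Mble f) :
    partitionEntropy μ f + partitionEntropy μ ((fun z => z.2.1) ∘ f)
      ≤ partitionEntropy μ ((fun z => (z.1, z.2.1)) ∘ f) + partitionEntropy μ (Prod.snd ∘ f) := by
  classical
  set p12 : ι × κ × γ → ι × κ := fun z => (z.1, z.2.1) with hp12
  set p2 : ι × κ × γ → κ := fun z => z.2.1 with hp2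
  set a : ι × κ × γ → ℝ := fun t => pw μ f t with ha_def
  set b : ι × κ × γ → ℝ :=
    fun t => pw μ (p12 ∘ f) (p12 t) * pw μ (Prod.snd ∘ f) t.2 / pw μ (p2 ∘ f) t.2.1 with hb_def
  have hb_nonneg : ∀ t, 0 ≤ b t := fun t =>
    div_nonneg (mul_nonneg pw_nonneg pw_nonneg) pw_nonneg
  have hdom12 : ∀ t : ι × κ × γ, a t ≤ pw μ (p12 ∘ f) (p12 t) := fun t => pw_le_comp p12 t
  have hdom23 : ∀ t : ι × κ × γ, a t ≤ pw μ (Prod.snd ∘ f) t.2 := fun t => pw_le_comp Prod.snd t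
  have hdom2 : ∀ t : ι × κ × γ, a t ≤ pw μ (p2 ∘ f) t.2.1 := fun t => pw_le_comp p2 t
  -- marginal identities
  have hmarg12 : ∀ y : κ, ∑ x : ι, pw μ (p12 ∘ f) (x, y) = pw μ (p2 ∘ f) y := by
    intro y
    have := sum_pw_fst (μ := μ) (h := p12 ∘ f) (hf.comp p12) y
    exact this
  have hmarg23 : ∀ y : κ, ∑ z : γ, pw μ (Prod.snd ∘ f) (y, z) = pw μ (p2 ∘ f) y := by
    intro y
    have := sum_pw_snd (μ := μ) (h := Prod.snd ∘ f) (hf.comp Prod.snd) y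
    exact this
  have hsum : ∑ t, b t ≤ ∑ t, a t := by
    rw [sum_pw hf]
    have e1 : ∀ y : κ, (∑ x : ι, pw μ (p12 ∘ f) (x, y)) * (∑ z : γ, pw μ (Prod.snd ∘ f) (y, z))
        / pw μ (p2 ∘ f) y = ∑ x : ι, ∑ z : γ, b (x, y, z) := by
      intro y
      rw [Finset.sum_mul, Finset.sum_div]
      refine Finset.sum_congr rfl (fun x _ => ?_)
      rw [Finset.mul_sum, Finset.sum_div]
    have h1 : ∑ t : ι × κ × γ, b t
        = ∑ y : κ, (∑ x : ι, pw μ (p12 ∘ f) (x, y)) * (∑ z : γ, pw μ (Prod.snd ∘ f) (y, z))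
            / pw μ (p2 ∘ f) y := by
      calc ∑ t : ι × κ × γ, b t = ∑ x : ι, ∑ y : κ, ∑ z : γ, b (x, y, z) := by
            simp only [Fintype.sum_prod_type]
        _ = ∑ y : κ, ∑ x : ι, ∑ z : γ, b (x, y, z) :=
            Finset.sum_comm
        _ = _ := Finset.sum_congr rfl (fun y _ => (e1 y).symm)
    rw [h1]
    have h2 : ∀ y : κ, (∑ x : ι, pw μ (p12 ∘ f) (x, y)) * (∑ z : γ, pw μ (Prod.snd ∘ f) (y, z))
        / pw μ (p2 ∘ f) y ≤ pw μ (p2 ∘ f) y := by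
      intro y
      rw [hmarg12 y, hmarg23 y]
      rcases eq_or_ne (pw μ (p2 ∘ f) y) 0 with h0 | h0
      · simp [h0]
      · rw [mul_div_assoc, div_self h0, mul_one]
    calc ∑ y : κ, _ ≤ ∑ y : κ, pw μ (p2 ∘ f) y := Finset.sum_le_sum (fun y _ => h2 y)
      _ = 1 := sum_pw (hf.comp p2)
  have hkey := klsum Finset.univ a b (fun t _ => pw_nonneg) (fun t _ => hb_nonneg t)
    (fun t _ hat => by
      have h12 : pw μ (p12 ∘ f) (p12 t) ≠ 0 :=
        fun h => hat (le_antisymm (h ▸ hdom12 t) pw_nonneg)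
      have h23 : pw μ (Prod.snd ∘ f) t.2 ≠ 0 :=
        fun h => hat (le_antisymm (h ▸ hdom23 t) pw_nonneg)
      have h2 : pw μ (p2 ∘ f) t.2.1 ≠ 0 :=
        fun h => hat (le_antisymm (h ▸ hdom2 t) pw_nonneg)
      exact div_ne_zero (mul_ne_zero h12 h23) h2)
    hsum
  have hsplit : ∑ t, a t * Real.log (b t)
      = ∑ t : ι × κ × γ, a t * Real.log (pw μ (p12 ∘ f) (p12 t))
        + ∑ t : ι × κ × γ, a t * Real.log (pw μ (Prod.snd ∘ f) t.2)
        - ∑ t : ι × κ × γ, a t * Real.log (pw μ (p2 ∘ f) t.2.1) := by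
    rw [← Finset.sum_add_distrib, ← Finset.sum_sub_distrib]
    refine Finset.sum_congr rfl (fun t _ => ?_)
    rcases eq_or_ne (a t) 0 with h0 | h0
    · simp [h0]
    · have h12 : pw μ (p12 ∘ f) (p12 t) ≠ 0 :=
        fun h => h0 (le_antisymm (h ▸ hdom12 t) pw_nonneg)
      have h23 : pw μ (Prod.snd ∘ f) t.2 ≠ 0 :=
        fun h => h0 (le_antisymm (h ▸ hdom23 t) pw_nonneg)
      have h2 : pw μ (p2 ∘ f) t.2.1 ≠ 0 :=
        fun h => h0 (le_antisymm (h ▸ hdom2 t) pw_nonneg)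
      rw [hb_def]; simp only []
      rw [Real.log_div (mul_ne_zero h12 h23) h2, Real.log_mul h12 h23]; ring
  have h12s : ∑ t : ι × κ × γ, a t * Real.log (pw μ (p12 ∘ f) (p12 t))
      = ∑ u : ι × κ, pw μ (p12 ∘ f) u * Real.log (pw μ (p12 ∘ f) u) := by
    exact sum_pw_mul (μ := μ) hf p12 (fun u => Real.log (pw μ (p12 ∘ f) u))
  have h23s : ∑ t : ι × κ × γ, a t * Real.log (pw μ (Prod.snd ∘ f) t.2)
      = ∑ u : κ × γ, pw μ (Prod.snd ∘ f) u * Real.log (pw μ (Prod.snd ∘ f) u) := by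
    exact sum_pw_mul (μ := μ) hf Prod.snd (fun u => Real.log (pw μ (Prod.snd ∘ f) u))
  have h2s : ∑ t : ι × κ × γ, a t * Real.log (pw μ (p2 ∘ f) t.2.1)
      = ∑ u : κ, pw μ (p2 ∘ f) u * Real.log (pw μ (p2 ∘ f) u) := by
    exact sum_pw_mul (μ := μ) hf p2 (fun u => Real.log (pw μ (p2 ∘ f) u))
  rw [hsplit, h12s, h23s, h2s] at hkey
  have e0 := partitionEntropy_eq_neg_sum (μ := μ) (f := f)
  have e12 := partitionEntropy_eq_neg_sum (μ := μ) (f := p12 ∘ f)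
  have e23 := partitionEntropy_eq_neg_sum (μ := μ) (f := Prod.snd ∘ f)
  have e2 := partitionEntropy_eq_neg_sum (μ := μ) (f := p2 ∘ f)
  have : ∑ t : ι × κ × γ, a t * Real.log (a t)
      = ∑ t : ι × κ × γ, pw μ f t * Real.log (pw μ f t) := rfl
  linarith [hkey, this]

end Part2

section Proc

variable {X : Type*} [MeasurableSpace X] {μ : Measure X} [IsProbabilityMeasure μ]
variable {ι κ : Type*} [Fintype ι] [Fintype κ]
variable {T : X → X}

/-- The process observable. -/
def procObs (T : X → X) {ι : Type*} (f : X → ι) (n : ℕ) : X → (Fin n → ι) :=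
  fun x i => f (T^[(i : ℕ)] x)

lemma processEntropy_def (f : X → ι) (n : ℕ) :
    processEntropy μ T f n = partitionEntropy μ (procObs T f n) := rfl

lemma Mble.pair {f : X → ι} {g : X → κ} (hf : Mble f) (hg : Mble g) :
    Mble (fun x => (f x, g x)) := by
  intro p
  have : (fun x => (f x, g x)) ⁻¹' {p} = f ⁻¹' {p.1} ∩ g ⁻¹' {p.2} := by
    ext x; simp [Prod.ext_iff]
  rw [this]; exact (hf _).inter (hg _)

lemma Mble.comp_meas {Y : Type*} [MeasurableSpace Y] {f : X → ι} (hf : Mble f)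
    {p : Y → X} (hp : Measurable p) : Mble (f ∘ p) := fun i => hp (hf i)

lemma Mble.proc {f : X → ι} (hf : Mble f) (hT : Measurable T) (n : ℕ) :
    Mble (_root_.procObs T f n) := by
  intro w
  have : _root_.procObs T f n ⁻¹' {w} = ⋂ i : Fin n, (T^[(i : ℕ)]) ⁻¹' (f ⁻¹' {w i}) := by
    ext x
    simp only [Set.mem_preimage, Set.mem_singleton_iff, Set.mem_iInter, _root_.procObs]
    constructor
    · intro h i; exact congrFun h i
    · intro h; funext i; exact h i
  rw [this]
  exact MeasurableSet.iInter (fun i => (hT.iterate _) (hf _))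

lemma measurable_of_mble_fin {k : ℕ} {f : X → Fin k} (hf : Mble f) : Measurable f := by
  intro s _
  classical
  have : f ⁻¹' s = ⋃ j ∈ s, f ⁻¹' {j} := by ext x; simp
  rw [this]
  exact MeasurableSet.biUnion (Set.to_countable _) (fun j _ => hf j)

lemma map_iterate (hT : Measurable T) (hinv : μ.map T = μ) (n : ℕ) :
    μ.map (T^[n]) = μ := by
  induction n with
  | zero => simp [Function.iterate_zero, Measure.map_id]
  | succ n ih =>
    rw [Function.iterate_succ, ← Measure.map_map (hT.iterate n) hT, hinv, ih]

lemma partitionEntropy_map {Y : Type*} [MeasurableSpace Y] {ρ : Measure Y}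
    {g : Y → ι} (hg : Mble g) {p : X → Y} (hp : Measurable p) (h : μ.map p = ρ) :
    partitionEntropy ρ g = partitionEntropy μ (g ∘ p) := by
  unfold partitionEntropy
  refine Finset.sum_congr rfl (fun i _ => ?_)
  rw [← h, Measure.map_apply hp (hg i)]
  rfl

lemma partitionEntropy_comp_iterate (hT : Measurable T) (hinv : μ.map T = μ)
    {g : X → ι} (hg : Mble g) (n : ℕ) :
    partitionEntropy μ (g ∘ T^[n]) = partitionEntropy μ g := by
  exact (partitionEntropy_map hg (hT.iterate n) (map_iterate hT hinv n)).symm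

lemma append_injective (n m : ℕ) :
    Function.Injective (fun p : (Fin n → ι) × (Fin m → ι) => Fin.append p.1 p.2) := by
  intro p q h
  have h' : Fin.append p.1 p.2 = Fin.append q.1 q.2 := h
  have h1 : p.1 = q.1 := by
    funext i
    have := congrFun h' (Fin.castAdd m i)
    rwa [Fin.append_left, Fin.append_left] at this
  have h2 : p.2 = q.2 := by
    funext i
    have := congrFun h' (Fin.natAdd n i)
    rwa [Fin.append_right, Fin.append_right] at this
  exact Prod.ext h1 h2

lemma procObs_add (f : X → ι) (n m : ℕ) :
    procObs T f (n + m)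
      = (fun p : (Fin n → ι) × (Fin m → ι) => Fin.append p.1 p.2)
        ∘ (fun x => (procObs T f n x, procObs T f m (T^[n] x))) := by
  funext x
  funext i
  simp only [Function.comp_apply]
  refine Fin.addCases (fun i => ?_) (fun i => ?_) i
  · rw [Fin.append_left]
    simp [procObs, Fin.coe_castAdd]
  · rw [Fin.append_right]
    simp only [procObs, Fin.coe_natAdd]
    rw [add_comm n (i : ℕ), Function.iterate_add_apply]

lemma processEntropy_subadd (hT : Measurable T) (hinv : μ.map T = μ)
    {f : X → ι} (hf : Mble f) (n m : ℕ) :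
    processEntropy μ T f (n + m) ≤ processEntropy μ T f n + processEntropy μ T f m := by
  rw [processEntropy_def, procObs_add, partitionEntropy_comp_inj (append_injective n m)]
  have hpair : Mble (fun x => (procObs T f n x, procObs T f m (T^[n] x))) :=
    (hf.proc hT n).pair ((hf.proc hT m).comp_meas (hT.iterate n))
  calc partitionEntropy μ (fun x => (procObs T f n x, procObs T f m (T^[n] x)))
      ≤ partitionEntropy μ (Prod.fst ∘ fun x => (procObs T f n x, procObs T f m (T^[n] x)))
        + partitionEntropy μ (Prod.snd ∘ fun x => (procObs T f n x, procObs T f m (T^[n] x))) :=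
        partitionEntropy_pair_le hpair
    _ = processEntropy μ T f n + processEntropy μ T f m := by
        have h1 : (Prod.fst ∘ fun x => (procObs T f n x, procObs T f m (T^[n] x)))
            = procObs T f n := rfl
        have h2 : (Prod.snd ∘ fun x => (procObs T f n x, procObs T f m (T^[n] x)))
            = procObs T f m ∘ T^[n] := rfl
        rw [h1, h2, partitionEntropy_comp_iterate hT hinv (hf.proc hT m) n]
        rfl

lemma processEntropy_nonneg (f : X → ι) (n : ℕ) : 0 ≤ processEntropy μ T f n :=
  partitionEntropy_nonneg

/-- Fekete: existence of the entropy rate. -/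
lemma exists_rate (hT : Measurable T) (hinv : μ.map T = μ) {f : X → ι} (hf : Mble f) :
    ∃ L : ℝ, 0 ≤ L ∧ Tendsto (fun n => processEntropy μ T f n / n) atTop (𝓝 L) := by
  have hsub : Subadditive (fun n => processEntropy μ T f n) :=
    fun n m => processEntropy_subadd hT hinv hf n m
  have hbdd : BddBelow (Set.range fun n => processEntropy μ T f n / (n : ℝ)) := by
    refine ⟨0, fun x hx => ?_⟩
    obtain ⟨n, rfl⟩ := hx
    exact div_nonneg (processEntropy_nonneg f n) (Nat.cast_nonneg n)
  have ht := hsub.tendsto_lim hbdd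
  refine ⟨hsub.lim, ?_, ht⟩
  refine ge_of_tendsto ht (eventually_atTop.2 ⟨1, fun n _ => ?_⟩)
  exact div_nonneg (processEntropy_nonneg f n) (Nat.cast_nonneg n)

lemma limsup_ofReal_of_tendsto {u : ℕ → ℝ} {L : ℝ} (h : Tendsto u atTop (𝓝 L)) :
    Filter.limsup (fun n => ENNReal.ofReal (u n)) Filter.atTop = ENNReal.ofReal L :=
  ((ENNReal.continuous_ofReal.tendsto L).comp h).limsup_eq

lemma comp_left_injective {e : ι → κ} (he : Function.Injective e) (n : ℕ) :
    Function.Injective (fun (w : Fin n → ι) => e ∘ w) := by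
  intro w w' h
  funext i
  exact he (congrFun h i)

/-- Any finite-fintype observable's rate is dominated by `ksEntropy`. -/
lemma rate_le_ksEntropy (hT : Measurable T) (hinv : μ.map T = μ) {f : X → ι} (hf : Mble f)
    {L : ℝ} (hL : Tendsto (fun n => processEntropy μ T f n / n) atTop (𝓝 L)) :
    ENNReal.ofReal L ≤ ksEntropy μ T := by
  classical
  set k := Fintype.card ι with hk
  set e := (Fintype.equivFin ι) with he
  have hproc : ∀ n, processEntropy μ T ((e : ι → Fin k) ∘ f) n = processEntropy μ T f n := by
    intro n
    rw [processEntropy_def, processEntropy_def]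
    have : procObs T ((e : ι → Fin k) ∘ f) n
        = (fun w : Fin n → ι => (e : ι → Fin k) ∘ w) ∘ procObs T f n := rfl
    rw [this, partitionEntropy_comp_inj (comp_left_injective e.injective n)]
  have hm : Measurable ((e : ι → Fin k) ∘ f) :=
    measurable_of_mble_fin (hf.comp _)
  have hlim : Filter.limsup
      (fun n : ℕ => ENNReal.ofReal (processEntropy μ T ((e : ι → Fin k) ∘ f) n / n))
      Filter.atTop = ENNReal.ofReal L := by
    have : (fun n : ℕ => ENNReal.ofReal (processEntropy μ T ((e : ι → Fin k) ∘ f) n / n))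
        = fun n : ℕ => ENNReal.ofReal (processEntropy μ T f n / n) := by
      funext n; rw [hproc n]
    rw [this]
    exact limsup_ofReal_of_tendsto hL
  rw [ksEntropy]
  refine le_iSup_of_le k (le_iSup_of_le ((e : ι → Fin k) ∘ f) (le_iSup_of_le hm hlim.ge))

end Proc
section Cond

variable {X : Type*} [MeasurableSpace X] {μ : Measure X} [IsProbabilityMeasure μ]
variable {ι κ γ : Type*} [Fintype ι] [Fintype κ] [Fintype γ]
variable {T : X → X}

lemma snoc_injective {α : Type*} (n : ℕ) :
    Function.Injective (fun p : (Fin n → α) × α => (Fin.snoc p.1 p.2 : Fin (n + 1) → α)) := by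
  intro p q h
  have h' : (Fin.snoc p.1 p.2 : Fin (n + 1) → α) = Fin.snoc q.1 q.2 := h
  refine Prod.ext ?_ ?_
  · funext i
    have := congrFun h' i.castSucc
    rwa [Fin.snoc_castSucc, Fin.snoc_castSucc] at this
  · have := congrFun h' (Fin.last n)
    rwa [Fin.snoc_last, Fin.snoc_last] at this

lemma procObs_succ (f : X → ι) (n : ℕ) :
    procObs T f (n + 1)
      = (fun p : (Fin n → ι) × ι => (Fin.snoc p.1 p.2 : Fin (n + 1) → ι))
        ∘ (fun x => (procObs T f n x, f (T^[n] x))) := by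
  funext x
  funext i
  simp only [Function.comp_apply]
  refine Fin.lastCases ?_ (fun j => ?_) i
  · rw [Fin.snoc_last]; rfl
  · rw [Fin.snoc_castSucc]; rfl

lemma zip_injective {α β : Type*} (n : ℕ) :
    Function.Injective (fun p : (Fin n → α) × (Fin n → β) => fun i => (p.1 i, p.2 i)) := by
  intro p q h
  refine Prod.ext ?_ ?_
  · funext i; exact congrArg Prod.fst (congrFun h i)
  · funext i; exact congrArg Prod.snd (congrFun h i)

lemma processEntropy_zero (f : X → ι) : processEntropy μ T f 0 = 0 := by
  show partitionEntropy μ (procObs T f 0) = 0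
  rw [partitionEntropy, Fintype.sum_unique]
  have : procObs T f 0 ⁻¹' {default} = Set.univ := by
    ext x
    simp only [Set.mem_preimage, Set.mem_singleton_iff, Set.mem_univ, iff_true]
    exact Subsingleton.elim _ _
  simp [this]

/-- The key induction: `H(joinₙ (P ∨ R)) ≤ H(joinₙ R) + n · (H(P ∨ R) - H(R))`. -/
lemma processEntropy_pair_induction (hT : Measurable T) (hinv : μ.map T = μ)
    {P : X → ι} {R : X → κ} (hP : Mble P) (hR : Mble R) (n : ℕ) :
    processEntropy μ T (fun x => (P x, R x)) n
      ≤ processEntropy μ T R n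
        + n * (partitionEntropy μ (fun x => (P x, R x)) - partitionEntropy μ R) := by
  set W : X → ι × κ := fun x => (P x, R x) with hW
  have hWm : Mble W := hP.pair hR
  induction n with
  | zero => simp [processEntropy_zero]
  | succ n ih =>
    set A := procObs T P n with hA
    set B := procObs T R n with hB
    set C : X → ι := P ∘ T^[n] with hC
    set D : X → κ := R ∘ T^[n] with hD
    have hAm : Mble A := hP.proc hT n
    have hBm : Mble B := hR.proc hT n
    have hCm : Mble C := hP.comp_meas (hT.iterate n)
    have hDm : Mble D := hR.comp_meas (hT.iterate n)
    -- Step 1: H(proc W (n+1)) = H(C ∨ (D ∨ (A ∨ B)))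
    have step1 : processEntropy μ T W (n + 1)
        = partitionEntropy μ (fun x => (C x, (D x, (A x, B x)))) := by
      rw [processEntropy_def, procObs_succ, partitionEntropy_comp_inj (snoc_injective n)]
      have he : Function.Injective
          (fun p : (Fin n → ι × κ) × (ι × κ) =>
            (p.2.1, (p.2.2, (fun i => (p.1 i).1, fun i => (p.1 i).2)))) := by
        intro p q h
        obtain ⟨h1, h2, h3, h4⟩ : p.2.1 = q.2.1 ∧ p.2.2 = q.2.2
            ∧ (fun i => (p.1 i).1) = (fun i => (q.1 i).1)
            ∧ (fun i => (p.1 i).2) = (fun i => (q.1 i).2) := by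
          have e1 := congrArg Prod.fst h
          have e2 := congrArg (fun z => z.2.1) h
          have e3 := congrArg (fun z => z.2.2.1) h
          have e4 := congrArg (fun z => z.2.2.2) h
          exact ⟨e1, e2, e3, e4⟩
        refine Prod.ext ?_ (Prod.ext h1 h2)
        funext i
        exact Prod.ext (congrFun h3 i) (congrFun h4 i)
      have hcomp : (fun x => (C x, (D x, (A x, B x))))
          = (fun p : (Fin n → ι × κ) × (ι × κ) =>
              (p.2.1, (p.2.2, (fun i => (p.1 i).1, fun i => (p.1 i).2))))
            ∘ (fun x => (procObs T W n x, W (T^[n] x))) := rfl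
      rw [hcomp, partitionEntropy_comp_inj he]
    -- strong subadditivity: H(C ∨ (D∨(A∨B))) + H(D) ≤ H(C ∨ D) + H(D ∨ (A∨B))
    have SA1 := partitionEntropy_strong (μ := μ)
      (f := fun x => (C x, (D x, (A x, B x)))) (hCm.pair (hDm.pair (hAm.pair hBm)))
    -- identify pieces of SA1
    have id1 : ((fun z : ι × κ × ((Fin n → ι) × (Fin n → κ)) => z.2.1)
        ∘ (fun x => (C x, (D x, (A x, B x))))) = D := rfl
    have id2 : ((fun z : ι × κ × ((Fin n → ι) × (Fin n → κ)) => (z.1, z.2.1))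
        ∘ (fun x => (C x, (D x, (A x, B x))))) = fun x => (C x, D x) := rfl
    have id3 : (Prod.snd ∘ (fun x => (C x, (D x, (A x, B x)))))
        = fun x => (D x, (A x, B x)) := rfl
    rw [id1, id2, id3] at SA1
    -- H(C ∨ D) = H(W) and H(D) = H(R)
    have hCD : partitionEntropy μ (fun x => (C x, D x)) = partitionEntropy μ W := by
      have : (fun x => (C x, D x)) = W ∘ T^[n] := rfl
      rw [this, partitionEntropy_comp_iterate hT hinv hWm n]
    have hDR : partitionEntropy μ D = partitionEntropy μ R :=
      partitionEntropy_comp_iterate hT hinv hR n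
    -- strong subadditivity: H(D ∨ (A∨B)) + H(B) ≤ H(D ∨ B) + H(B ∨ A)... use (D, B, A) triple
    have SA2 := partitionEntropy_strong (μ := μ)
      (f := fun x => (D x, (B x, A x))) (hDm.pair (hBm.pair hAm))
    have id4 : ((fun z : κ × (Fin n → κ) × (Fin n → ι) => z.2.1)
        ∘ (fun x => (D x, (B x, A x)))) = B := rfl
    have id5 : ((fun z : κ × (Fin n → κ) × (Fin n → ι) => (z.1, z.2.1))
        ∘ (fun x => (D x, (B x, A x)))) = fun x => (D x, B x) := rfl
    have id6 : (Prod.snd ∘ (fun x => (D x, (B x, A x))))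
        = fun x => (B x, A x) := rfl
    rw [id4, id5, id6] at SA2
    -- swap inner pair: H(D ∨ (A∨B)) = H(D ∨ (B∨A))
    have hswap1 : partitionEntropy μ (fun x => (D x, (A x, B x)))
        = partitionEntropy μ (fun x => (D x, (B x, A x))) := by
      have : (fun x => (D x, (B x, A x)))
          = (fun z : κ × ((Fin n → ι) × (Fin n → κ)) => (z.1, (z.2.2, z.2.1)))
            ∘ (fun x => (D x, (A x, B x))) := rfl
      rw [this, partitionEntropy_comp_inj (by
        intro p q h
        have e1 := congrArg Prod.fst h
        have e2 := congrArg (fun z => z.2.2) h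
        have e3 := congrArg (fun z => z.2.1) h
        exact Prod.ext e1 (Prod.ext e2 e3))]
    -- H(B ∨ A) = H(A ∨ B) = H(proc W n)
    have hBA : partitionEntropy μ (fun x => (B x, A x))
        = processEntropy μ T W n := by
      have h1 : (fun x => ((fun i => ((fun x => (A x, B x)) x |>.1 i,
          ((fun x => (A x, B x)) x).2 i)) : Fin n → ι × κ)) = procObs T W n := rfl
      have hswap : (fun x => (B x, A x))
          = Prod.swap ∘ (fun x => (A x, B x)) := rfl
      rw [hswap, partitionEntropy_comp_inj Prod.swap_injective]
      have hz : procObs T W n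
          = (fun p : (Fin n → ι) × (Fin n → κ) => fun i => (p.1 i, p.2 i))
            ∘ (fun x => (A x, B x)) := rfl
      rw [processEntropy_def, hz, partitionEntropy_comp_inj (zip_injective n)]
    -- H(D ∨ B) = H(proc R (n+1))
    have hDB : partitionEntropy μ (fun x => (D x, B x))
        = processEntropy μ T R (n + 1) := by
      have hswap : (fun x => (D x, B x)) = Prod.swap ∘ (fun x => (B x, D x)) := rfl
      rw [hswap, partitionEntropy_comp_inj Prod.swap_injective]
      rw [processEntropy_def, procObs_succ, partitionEntropy_comp_inj (snoc_injective n)]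
      rfl
    have hind := ih
    -- assemble
    have final : processEntropy μ T W (n + 1)
        ≤ processEntropy μ T R (n + 1)
          + (n + 1 : ℝ) * (partitionEntropy μ W - partitionEntropy μ R) := by
      have h1 : processEntropy μ T W (n + 1)
          ≤ partitionEntropy μ W - partitionEntropy μ R
            + partitionEntropy μ (fun x => (D x, (A x, B x))) := by
        rw [step1]; linarith [SA1, hCD, hDR]
      have h2 : partitionEntropy μ (fun x => (D x, (A x, B x)))
          ≤ processEntropy μ T R (n + 1) + processEntropy μ T W n
            - processEntropy μ T R n := by
        have hBR : partitionEntropy μ B = processEntropy μ T R n := rfl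
        linarith [SA2, hswap1, hBA, hDB]
      have h3 : processEntropy μ T W n ≤ processEntropy μ T R n
          + n * (partitionEntropy μ W - partitionEntropy μ R) := hind
      push_cast
      linarith
    simpa using final

end Cond
section Cond2

variable {X : Type*} [MeasurableSpace X] {μ : Measure X} [IsProbabilityMeasure μ]
variable {ι κ γ : Type*} [Fintype ι] [Fintype κ] [Fintype γ]
variable {T : X → X}

lemma processEntropy_le_cond (hT : Measurable T) (hinv : μ.map T = μ)
    {P : X → ι} {R : X → κ} (hP : Mble P) (hR : Mble R) (n : ℕ) :
    processEntropy μ T P n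
      ≤ processEntropy μ T R n
        + n * (partitionEntropy μ (fun x => (P x, R x)) - partitionEntropy μ R) := by
  have h1 : processEntropy μ T P n ≤ processEntropy μ T (fun x => (P x, R x)) n := by
    rw [processEntropy_def, processEntropy_def]
    have hc : procObs T P n
        = (fun w : Fin n → ι × κ => fun i => (w i).1) ∘ procObs T (fun x => (P x, R x)) n := rfl
    rw [hc]
    exact partitionEntropy_comp_le ((hP.pair hR).proc hT n) _
  exact h1.trans (processEntropy_pair_induction hT hinv hP hR n)

/-- Rate version of the conditional bound. -/
lemma rate_le_rate_add_cond (hT : Measurable T) (hinv : μ.map T = μ)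
    {P : X → ι} {R : X → κ} (hP : Mble P) (hR : Mble R) {L L' : ℝ}
    (hL : Tendsto (fun n => processEntropy μ T P n / n) atTop (𝓝 L))
    (hL' : Tendsto (fun n => processEntropy μ T R n / n) atTop (𝓝 L')) :
    L ≤ L' + (partitionEntropy μ (fun x => (P x, R x)) - partitionEntropy μ R) := by
  set c := partitionEntropy μ (fun x => (P x, R x)) - partitionEntropy μ R with hc
  have hR' : Tendsto (fun n : ℕ => processEntropy μ T R n / n + c) atTop (𝓝 (L' + c)) :=
    hL'.add tendsto_const_nhds
  refine le_of_tendsto_of_tendsto hL hR' ?_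
  filter_upwards [eventually_ge_atTop 1] with n hn
  have hn' : (0 : ℝ) < n := by exact_mod_cast hn
  have := processEntropy_le_cond hT hinv hP hR n
  have heq : processEntropy μ T R n / n + c = (processEntropy μ T R n + n * c) / n := by
    field_simp
  rw [heq]
  exact (div_le_div_iff_of_pos_right hn').mpr this

end Cond2
section Fano

variable {X : Type*} [MeasurableSpace X] {μ : Measure X} [IsProbabilityMeasure μ]
variable {ι κ γ : Type*} [Fintype ι] [Fintype κ] [Fintype γ]

/-- Conditioning on a finer partition gives smaller conditional entropy. -/
lemma condH_coarsen {P : X → ι} {R : X → κ} (ψ : κ → γ) (hP : Mble P) (hR : Mble R) :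
    partitionEntropy μ (fun x => (P x, R x)) - partitionEntropy μ R
      ≤ partitionEntropy μ (fun x => (P x, ψ (R x)))
        - partitionEntropy μ (fun x => ψ (R x)) := by
  have SA := partitionEntropy_strong (μ := μ) (f := fun x => (P x, (ψ (R x), R x)))
    (hP.pair ((hR.comp ψ).pair hR))
  have id1 : ((fun z : ι × γ × κ => z.2.1) ∘ (fun x => (P x, (ψ (R x), R x))))
      = fun x => ψ (R x) := rfl
  have id2 : ((fun z : ι × γ × κ => (z.1, z.2.1)) ∘ (fun x => (P x, (ψ (R x), R x))))
      = fun x => (P x, ψ (R x)) := rfl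
  have id3 : (Prod.snd ∘ (fun x => (P x, (ψ (R x), R x)))) = fun x => (ψ (R x), R x) := rfl
  rw [id1, id2, id3] at SA
  have h2 : partitionEntropy μ (fun x => (P x, (ψ (R x), R x)))
      = partitionEntropy μ (fun x => (P x, R x)) := by
    have hc : (fun x => (P x, (ψ (R x), R x)))
        = (fun z : ι × κ => (z.1, (ψ z.2, z.2))) ∘ (fun x => (P x, R x)) := rfl
    rw [hc, partitionEntropy_comp_inj (fun p q h => by
      have e1 := congrArg Prod.fst h
      have e2 := congrArg (fun z : ι × γ × κ => z.2.2) h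
      exact Prod.ext e1 e2)]
  have h3 : partitionEntropy μ (fun x => (ψ (R x), R x)) = partitionEntropy μ R := by
    have hc : (fun x => (ψ (R x), R x)) = (fun r : κ => (ψ r, r)) ∘ R := rfl
    rw [hc, partitionEntropy_comp_inj (fun p q h => congrArg Prod.snd h)]
  linarith

/-- Fano-type inequality: if `P` and `Q` agree off a set of measure `err`, the conditional
entropy of `P` given `Q` is at most `H(err) + err log K`. -/
lemma condH_fano [Nonempty ι] [DecidableEq ι] {P Q : X → ι} (hP : Mble P) (hQ : Mble Q) :
    partitionEntropy μ (fun x => (P x, Q x)) - partitionEntropy μ Q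
      ≤ Real.negMulLog (pw μ (fun x => decide (P x = Q x)) false)
        + Real.negMulLog (1 - pw μ (fun x => decide (P x = Q x)) false)
        + pw μ (fun x => decide (P x = Q x)) false * Real.log (Fintype.card ι) := by
  classical
  set E : X → Bool := fun x => decide (P x = Q x) with hE_def
  set err : ℝ := pw μ E false with herr_def
  have hE : Mble E := by
    have : E = (fun z : ι × ι => decide (z.1 = z.2)) ∘ (fun x => (P x, Q x)) := rfl
    rw [this]; exact (hP.pair hQ).comp _
  set big : X → ι × ι × Bool := fun x => (P x, (Q x, E x)) with hbig_def
  have hbig : Mble big := hP.pair (hQ.pair hE)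
  have hQE : Mble (fun x => (Q x, E x)) := hQ.pair hE
  set K : ℕ := Fintype.card ι with hK
  have hK0 : 0 < (K : ℝ) := by exact_mod_cast Fintype.card_pos
  -- (iv) entropy of E
  have hEtrue : pw μ E true = 1 - err := by
    have hsum := sum_pw (μ := μ) hE
    rw [Fintype.sum_bool] at hsum
    linarith
  have hHE : partitionEntropy μ E = Real.negMulLog err + Real.negMulLog (1 - err) := by
    rw [partitionEntropy, Fintype.sum_bool]
    have h1 : (μ (E ⁻¹' {true})).toReal = pw μ E true := rfl
    have h2 : (μ (E ⁻¹' {false})).toReal = pw μ E false := rfl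
    rw [h1, h2, hEtrue]
    ring
  -- (i)
  have hi : partitionEntropy μ (fun x => (P x, Q x)) ≤ partitionEntropy μ big := by
    have hc : (fun x => (P x, Q x)) = (fun z : ι × ι × Bool => (z.1, z.2.1)) ∘ big := rfl
    rw [hc]
    exact partitionEntropy_comp_le hbig _
  -- (ii)
  have hii : partitionEntropy μ (fun x => (Q x, E x))
      ≤ partitionEntropy μ Q + partitionEntropy μ E := by
    have h := partitionEntropy_pair_le (μ := μ) (f := fun x => (Q x, E x)) hQE
    exact h
  -- (iii) the klsum computation
  have hiii : partitionEntropy μ big - partitionEntropy μ (fun x => (Q x, E x))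
      ≤ err * Real.log K := by
    set a : ι × ι × Bool → ℝ := fun t => pw μ big t with ha_def
    set b : ι × ι × Bool → ℝ := fun t => pw μ (fun x => (Q x, E x)) t.2
      * (if t.2.2 = false then (K : ℝ)⁻¹ else if t.1 = t.2.1 then 1 else 0) with hb_def
    have hfac_nonneg : ∀ t : ι × ι × Bool,
        (0:ℝ) ≤ (if t.2.2 = false then (K : ℝ)⁻¹ else if t.1 = t.2.1 then 1 else 0) := by
      intro t
      split <;> [positivity; split <;> norm_num]
    have hsnd : Prod.snd ∘ big = fun x => (Q x, E x) := rfl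
    have hdom : ∀ t : ι × ι × Bool, a t ≤ pw μ (fun x => (Q x, E x)) t.2 := by
      intro t
      have := pw_le_comp (μ := μ) (f := big) Prod.snd t
      rwa [hsnd] at this
    have hempty : ∀ t : ι × ι × Bool, t.2.2 = true → t.1 ≠ t.2.1 → a t = 0 := by
      intro t htrue hne
      have : big ⁻¹' {t} = ∅ := by
        ext x
        simp only [Set.mem_preimage, Set.mem_singleton_iff, Set.mem_empty_iff_false, iff_false]
        intro h
        have h1 : P x = t.1 := congrArg Prod.fst h
        have h2 : Q x = t.2.1 := congrArg (fun z : ι × ι × Bool => z.2.1) h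
        have h3 : E x = t.2.2 := congrArg (fun z : ι × ι × Bool => z.2.2) h
        rw [htrue, hE_def] at h3
        have : P x = Q x := of_decide_eq_true h3
        exact hne (by rw [← h1, ← h2, this])
      simp [ha_def, pw, this]
    have hsum : ∑ t, b t ≤ ∑ t, a t := by
      have h1 : ∑ t : ι × ι × Bool, b t
          = ∑ u : ι × Bool, pw μ (fun x => (Q x, E x)) u
              * (∑ i : ι, if u.2 = false then (K : ℝ)⁻¹ else if i = u.1 then 1 else 0) := by
        rw [Fintype.sum_prod_type]
        rw [Finset.sum_comm]
        refine Finset.sum_congr rfl (fun u _ => ?_)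
        rw [Finset.mul_sum]
      have h2 : ∀ u : ι × Bool,
          (∑ i : ι, if u.2 = false then (K : ℝ)⁻¹ else if i = u.1 then 1 else 0) = 1 := by
        intro u
        by_cases h : u.2 = false
        · rw [Finset.sum_congr rfl (fun i _ => if_pos h), Finset.sum_const, Finset.card_univ]
          rw [nsmul_eq_mul, ← hK, mul_inv_cancel₀ hK0.ne']
        · have h' : u.2 = true := by simpa using h
          simp [h']
      have h3 : ∑ t : ι × ι × Bool, b t = 1 := by
        rw [h1]
        simp_rw [h2]
        simpa using sum_pw (μ := μ) hQE
      rw [h3, sum_pw (μ := μ) hbig]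
    have hkey := klsum Finset.univ a b (fun t _ => pw_nonneg)
      (fun t _ => mul_nonneg pw_nonneg (hfac_nonneg t))
      (fun t _ hat => by
        have hpw2 : pw μ (fun x => (Q x, E x)) t.2 ≠ 0 :=
          fun h => hat (le_antisymm (h ▸ hdom t) pw_nonneg)
        by_cases h : t.2.2 = false
        · simp only [hb_def, h, if_pos]
          exact mul_ne_zero hpw2 (by simpa using (inv_ne_zero hK0.ne'))
        · have h' : t.2.2 = true := by simpa using h
          have heq : t.1 = t.2.1 := by
            by_contra hne
            exact hat (hempty t h' hne)
          simp only [hb_def]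
          rw [if_neg h, if_pos heq, mul_one]
          exact hpw2)
      hsum
    have hsplit : ∑ t, a t * Real.log (b t)
        = ∑ t : ι × ι × Bool, a t * Real.log (pw μ (fun x => (Q x, E x)) t.2)
          + ∑ t : ι × ι × Bool, a t * (if t.2.2 = false then -(Real.log K) else 0) := by
      rw [← Finset.sum_add_distrib]
      refine Finset.sum_congr rfl (fun t _ => ?_)
      rcases eq_or_ne (a t) 0 with h0 | h0
      · simp [h0]
      · have hpw2 : pw μ (fun x => (Q x, E x)) t.2 ≠ 0 :=
          fun h => h0 (le_antisymm (h ▸ hdom t) pw_nonneg)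
        by_cases h : t.2.2 = false
        · simp only [hb_def]
          rw [if_pos h, if_pos h, Real.log_mul hpw2 (by simpa using (inv_ne_zero hK0.ne')),
            Real.log_inv]
          ring
        · have h' : t.2.2 = true := by simpa using h
          have heq : t.1 = t.2.1 := by
            by_contra hne
            exact h0 (hempty t h' hne)
          simp only [hb_def]
          rw [if_neg h, if_neg h, if_pos heq, mul_one]
          simp
    have hfirst : ∑ t : ι × ι × Bool, a t * Real.log (pw μ (fun x => (Q x, E x)) t.2)
        = ∑ u : ι × Bool, pw μ (fun x => (Q x, E x)) u
            * Real.log (pw μ (fun x => (Q x, E x)) u) := by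
      have := sum_pw_mul (μ := μ) hbig Prod.snd
        (fun u => Real.log (pw μ (fun x => (Q x, E x)) u))
      rw [hsnd] at this
      exact this
    have hsecond : ∑ t : ι × ι × Bool, a t * (if t.2.2 = false then -(Real.log K) else 0)
        = err * (-(Real.log K)) := by
      have h1 : ∀ t : ι × ι × Bool, a t * (if t.2.2 = false then -(Real.log K) else 0)
          = if (fun z : ι × ι × Bool => z.2.2) t = false then a t * (-(Real.log K)) else 0 := by
        intro t
        split <;> simp_all
      simp_rw [h1]
      rw [← Finset.sum_filter, ← Finset.sum_mul]
      have h2 := sum_pw_fiber (μ := μ) hbig (fun z : ι × ι × Bool => z.2.2) false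
      have h3 : (fun z : ι × ι × Bool => z.2.2) ∘ big = E := rfl
      rw [h3] at h2
      rw [show ∑ t ∈ Finset.univ.filter (fun t : ι × ι × Bool => t.2.2 = false), a t
        = err from h2]
    rw [hsplit, hfirst, hsecond] at hkey
    have e1 := partitionEntropy_eq_neg_sum (μ := μ) (f := big)
    have e2 := partitionEntropy_eq_neg_sum (μ := μ) (f := fun x => (Q x, E x))
    have : ∑ t : ι × ι × Bool, a t * Real.log (a t)
        = ∑ t : ι × ι × Bool, pw μ big t * Real.log (pw μ big t) := rfl
    nlinarith [hkey, this]
  linarith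

end Fano
section Factor

lemma mble_of_measurable {X : Type*} [MeasurableSpace X] {k : ℕ} {f : X → Fin k}
    (hf : Measurable f) : Mble f := fun i => hf (by trivial)

lemma iterate_comm {X Y : Type*} {S : X → X} {T : Y → Y} {p : X → Y}
    (hcomm : ∀ x, T (p x) = p (S x)) (n : ℕ) : ∀ x, T^[n] (p x) = p (S^[n] x) := by
  induction n with
  | zero => intro x; rfl
  | succ n ih =>
    intro x
    rw [Function.iterate_succ_apply', Function.iterate_succ_apply', ih, hcomm]

/-- Entropy of a factor is at most the entropy of the extension. -/
lemma ksEntropy_map_le {X Y : Type*} [MeasurableSpace X] [MeasurableSpace Y]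
    {lam : Measure X} [IsProbabilityMeasure lam] {S : X → X} {T : Y → Y} {p : X → Y}
    (hp : Measurable p) (hS : Measurable S) (hT : Measurable T)
    (hcomm : ∀ x, T (p x) = p (S x)) :
    ksEntropy (lam.map p) T ≤ ksEntropy lam S := by
  haveI : IsProbabilityMeasure (lam.map p) := Measure.isProbabilityMeasure_map hp.aemeasurable
  rw [ksEntropy]
  refine iSup_le fun k => iSup_le fun f => iSup_le fun hf => ?_
  have hproc : ∀ n, processEntropy (lam.map p) T f n = processEntropy lam S (f ∘ p) n := by
    intro n
    rw [processEntropy_def, processEntropy_def]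
    have h1 : partitionEntropy (lam.map p) (procObs T f n)
        = partitionEntropy lam (procObs T f n ∘ p) :=
      partitionEntropy_map ((mble_of_measurable hf).proc hT n) hp rfl
    rw [h1]
    have h2 : procObs T f n ∘ p = procObs S (f ∘ p) n := by
      funext x
      funext i
      exact congrArg f (iterate_comm hcomm (i : ℕ) x)
    rw [h2]
  have hterm : Filter.limsup
      (fun n : ℕ => ENNReal.ofReal (processEntropy (lam.map p) T f n / n)) Filter.atTop
      = Filter.limsup
        (fun n : ℕ => ENNReal.ofReal (processEntropy lam S (f ∘ p) n / n)) Filter.atTop := by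
    congr 1
    funext n
    rw [hproc n]
  rw [hterm, ksEntropy]
  exact le_iSup_of_le k (le_iSup_of_le (f ∘ p) (le_iSup_of_le (hf.comp hp) le_rfl))

lemma iSup_add_le_of_le {ιs : Sort*} (f : ιs → ℝ≥0∞) {c d : ℝ≥0∞} (hc : c ≤ d)
    (h : ∀ i, f i + c ≤ d) : (⨆ i, f i) + c ≤ d := by
  rcases isEmpty_or_nonempty ιs with h0 | h0
  · rw [iSup_of_empty]; simpa using hc
  · rw [ENNReal.iSup_add]; exact iSup_le h

lemma ksEntropy_add_le_of_le {X : Type*} [MeasurableSpace X] {μ : Measure X} {T : X → X}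
    {c d : ℝ≥0∞} (hc : c ≤ d)
    (h : ∀ (k : ℕ) (f : X → Fin k), Measurable f →
      Filter.limsup (fun n : ℕ => ENNReal.ofReal (processEntropy μ T f n / n)) Filter.atTop
        + c ≤ d) :
    ksEntropy μ T + c ≤ d := by
  rw [ksEntropy]
  refine iSup_add_le_of_le _ hc (fun k => ?_)
  refine iSup_add_le_of_le _ hc (fun f => ?_)
  refine iSup_add_le_of_le _ hc (fun hf => ?_)
  exact h k f hf

end Factor

section Indep

variable {Y Z : Type*} [MeasurableSpace Y] [MeasurableSpace Z]
variable {μ : Measure Y} {ν : Measure Z} [IsProbabilityMeasure μ] [IsProbabilityMeasure ν]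
variable {Ty : Y → Y} {Tz : Z → Z}

/-- Independence: entropy of a product process splits. -/
lemma processEntropy_prod {ι κ : Type*} [Fintype ι] [Fintype κ]
    (hTy : Measurable Ty) (hTz : Measurable Tz)
    {f : Y → ι} {g : Z → κ} (hf : Mble f) (hg : Mble g) (n : ℕ) :
    processEntropy (μ.prod ν) (fun q : Y × Z => (Ty q.1, Tz q.2)) (fun q => (f q.1, g q.2)) n
      = processEntropy μ Ty f n + processEntropy ν Tz g n := by
  set S : Y × Z → Y × Z := fun q => (Ty q.1, Tz q.2) with hS
  have hSiter : ∀ (m : ℕ) (q : Y × Z), S^[m] q = (Ty^[m] q.1, Tz^[m] q.2) := by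
    intro m
    induction m with
    | zero => intro q; rfl
    | succ m ih =>
      intro q
      rw [Function.iterate_succ_apply', Function.iterate_succ_apply',
        Function.iterate_succ_apply', ih]
  have hproc : procObs S (fun q : Y × Z => (f q.1, g q.2)) n
      = (fun p : (Fin n → ι) × (Fin n → κ) => fun i => (p.1 i, p.2 i))
        ∘ (fun q : Y × Z => (procObs Ty f n q.1, procObs Tz g n q.2)) := by
    funext q
    funext i
    simp only [Function.comp_apply, procObs]
    rw [hSiter (i : ℕ) q]
  rw [processEntropy_def, hproc, partitionEntropy_comp_inj (zip_injective n)]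
  have hkey : ∀ (u : Fin n → ι) (v : Fin n → κ),
      ((μ.prod ν) ((fun q : Y × Z => (procObs Ty f n q.1, procObs Tz g n q.2)) ⁻¹' {(u, v)}))
        = μ (procObs Ty f n ⁻¹' {u}) * ν (procObs Tz g n ⁻¹' {v}) := by
    intro u v
    have hset : (fun q : Y × Z => (procObs Ty f n q.1, procObs Tz g n q.2)) ⁻¹' {(u, v)}
        = (procObs Ty f n ⁻¹' {u}) ×ˢ (procObs Tz g n ⁻¹' {v}) := by
      ext q; simp [Prod.ext_iff]
    rw [hset, Measure.prod_prod]
  have hA : Mble (procObs Ty f n) := hf.proc hTy n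
  have hB : Mble (procObs Tz g n) := hg.proc hTz n
  rw [partitionEntropy]
  calc ∑ t : (Fin n → ι) × (Fin n → κ), Real.negMulLog
        (((μ.prod ν) ((fun q : Y × Z =>
          (procObs Ty f n q.1, procObs Tz g n q.2)) ⁻¹' {t})).toReal)
      = ∑ u : Fin n → ι, ∑ v : Fin n → κ,
          Real.negMulLog (pw μ (procObs Ty f n) u * pw ν (procObs Tz g n) v) := by
        rw [Fintype.sum_prod_type]
        refine Finset.sum_congr rfl (fun u _ => Finset.sum_congr rfl (fun v _ => ?_))
        rw [hkey u v, ENNReal.toReal_mul]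
        rfl
    _ = ∑ u : Fin n → ι, (Real.negMulLog (pw μ (procObs Ty f n) u)
          + pw μ (procObs Ty f n) u * ∑ v, Real.negMulLog (pw ν (procObs Tz g n) v)) := by
        refine Finset.sum_congr rfl (fun u _ => ?_)
        calc ∑ v, Real.negMulLog (pw μ (procObs Ty f n) u * pw ν (procObs Tz g n) v)
            = ∑ v, (pw ν (procObs Tz g n) v * Real.negMulLog (pw μ (procObs Ty f n) u)
              + pw μ (procObs Ty f n) u * Real.negMulLog (pw ν (procObs Tz g n) v)) :=
              Finset.sum_congr rfl (fun v _ => Real.negMulLog_mul _ _)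
          _ = (∑ v, pw ν (procObs Tz g n) v * Real.negMulLog (pw μ (procObs Ty f n) u))
              + ∑ v, pw μ (procObs Ty f n) u * Real.negMulLog (pw ν (procObs Tz g n) v) :=
              Finset.sum_add_distrib
          _ = Real.negMulLog (pw μ (procObs Ty f n) u)
              + pw μ (procObs Ty f n) u * ∑ v, Real.negMulLog (pw ν (procObs Tz g n) v) := by
              rw [← Finset.sum_mul, sum_pw hB, one_mul, ← Finset.mul_sum]
    _ = processEntropy μ Ty f n + processEntropy ν Tz g n := by
        rw [Finset.sum_add_distrib, ← Finset.sum_mul, sum_pw hA, one_mul]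
        rfl

end Indep
section Approx

/-- Approximation of a Borel set by a finite union of open rectangles in `e`-coordinates. -/
lemma exists_rect_approx {X Y Z : Type*} [TopologicalSpace X] [MeasurableSpace X] [BorelSpace X]
    [TopologicalSpace.PseudoMetrizableSpace X] [CompactSpace X]
    [TopologicalSpace Y] [TopologicalSpace Z]
    (e : X ≃ₜ Y × Z) (m : Measure X) [IsFiniteMeasure m]
    (C : Set X) (hC : MeasurableSet C) (δ : ℝ≥0∞) (hδ : δ ≠ 0) :
    ∃ s : Finset (Set Y × Set Z), (∀ r ∈ s, IsOpen r.1 ∧ IsOpen r.2) ∧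
      m (symmDiff C (⋃ r ∈ s, e ⁻¹' (r.1 ×ˢ r.2))) < δ := by
  classical
  have hδ2 : δ / 2 ≠ 0 := by
    simp [ENNReal.div_eq_top]
    intro h
    exact absurd h hδ
  obtain ⟨F, hFC, hFclosed, hFm⟩ :=
    hC.exists_isClosed_diff_lt (measure_ne_top m C) hδ2
  obtain ⟨U, hFU, hUopen, -, hUm⟩ :=
    hFclosed.measurableSet.exists_isOpen_diff_lt (measure_ne_top m F) hδ2
  have hFcomp : IsCompact F := hFclosed.isCompact
  have hKcomp : IsCompact (e '' F) := hFcomp.image e.continuous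
  have hOopen : IsOpen (e '' U) := e.isOpenMap U hUopen
  have hKO : e '' F ⊆ e '' U := Set.image_mono hFU
  -- cover the compact image by open rectangles inside e '' U
  have hrect : ∀ z : ↥(e '' F), ∃ r : Set Y × Set Z, IsOpen r.1 ∧ IsOpen r.2 ∧
      (z : Y × Z) ∈ r.1 ×ˢ r.2 ∧ r.1 ×ˢ r.2 ⊆ e '' U := by
    rintro ⟨z, hz⟩
    obtain ⟨V, W, hV, hW, hz1, hz2, hsub⟩ :=
      isOpen_prod_iff.mp hOopen z.1 z.2 (hKO hz)
    exact ⟨(V, W), hV, hW, ⟨hz1, hz2⟩, hsub⟩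
  choose r hro1 hro2 hrmem hrsub using hrect
  have hcover : e '' F ⊆ ⋃ z : ↥(e '' F), (r z).1 ×ˢ (r z).2 := by
    intro y hy
    exact Set.mem_iUnion.2 ⟨⟨y, hy⟩, hrmem ⟨y, hy⟩⟩
  obtain ⟨t, ht⟩ := hKcomp.elim_finite_subcover _
    (fun z => (hro1 z).prod (hro2 z)) hcover
  refine ⟨t.image r, ?_, ?_⟩
  · intro rr hrr
    obtain ⟨z, _, rfl⟩ := Finset.mem_image.mp hrr
    exact ⟨hro1 z, hro2 z⟩
  · set A : Set X := ⋃ rr ∈ t.image r, e ⁻¹' (rr.1 ×ˢ rr.2) with hA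
    have hFA : F ⊆ A := by
      intro x hx
      have : e x ∈ ⋃ z ∈ t, (r z).1 ×ˢ (r z).2 := ht (Set.mem_image_of_mem e hx)
      obtain ⟨z, hz, hmem⟩ := Set.mem_iUnion₂.mp this
      exact Set.mem_iUnion₂.mpr ⟨r z, Finset.mem_image_of_mem r hz, hmem⟩
    have hAU : A ⊆ U := by
      intro x hx
      obtain ⟨rr, hrr, hmem⟩ := Set.mem_iUnion₂.mp hx
      obtain ⟨z, _, rfl⟩ := Finset.mem_image.mp hrr
      have : e x ∈ e '' U := hrsub z hmem
      obtain ⟨u, hu, heq⟩ := this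
      rwa [← e.injective heq]
    have hsub : symmDiff C A ⊆ (C \ F) ∪ (U \ F) := by
      rw [Set.symmDiff_def]
      rintro x (⟨hxC, hxA⟩ | ⟨hxA, hxC⟩)
      · exact Or.inl ⟨hxC, fun h => hxA (hFA h)⟩
      · exact Or.inr ⟨hAU hxA, fun h => hxC (hFC h)⟩
    calc m (symmDiff C A) ≤ m ((C \ F) ∪ (U \ F)) := measure_mono hsub
      _ ≤ m (C \ F) + m (U \ F) := measure_union_le _ _
      _ < δ / 2 + δ / 2 := ENNReal.add_lt_add hFm hUm
      _ = δ := ENNReal.add_halves δ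

end Approx

section Joining

/-- A pair observable's process entropy is subadditive. -/
lemma processEntropy_pair_le_proc {X : Type*} [MeasurableSpace X] {μ : Measure X}
    [IsProbabilityMeasure μ] {T : X → X} (hT : Measurable T)
    {ι κ : Type*} [Fintype ι] [Fintype κ]
    {a : X → ι} {b : X → κ} (ha : Mble a) (hb : Mble b) (n : ℕ) :
    processEntropy μ T (fun x => (a x, b x)) n
      ≤ processEntropy μ T a n + processEntropy μ T b n := by
  have hz : procObs T (fun x => (a x, b x)) n
      = (fun pp : (Fin n → ι) × (Fin n → κ) => fun i => (pp.1 i, pp.2 i))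
        ∘ (fun x => (procObs T a n x, procObs T b n x)) := rfl
  rw [processEntropy_def, hz, partitionEntropy_comp_inj (zip_injective n)]
  have hpm : Mble (fun x => (procObs T a n x, procObs T b n x)) :=
    (ha.proc hT n).pair (hb.proc hT n)
  have h := partitionEntropy_pair_le (μ := μ) hpm
  exact h

/-- Core upper bound: entropy of a joining is at most the sum of entropies of two
jointly generating factors. -/
lemma ksEntropy_le_add_of_joining {G : Type*} [TopologicalSpace G] [CompactSpace G]
    [TopologicalSpace.MetrizableSpace G] [MeasurableSpace G] [BorelSpace G] [Nonempty G]
    (m : Measure (G × G)) [IsProbabilityMeasure m]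
    (S : G × G → G × G) (hS : Measurable S) (hminv : m.map S = m)
    (T : G → G) (hT : Measurable T)
    (p q : G × G → G) (e : (G × G) ≃ₜ (G × G)) (he : ∀ w, e w = (p w, q w))
    (hcp : ∀ w, T (p w) = p (S w)) (hcq : ∀ w, T (q w) = q (S w))
    (ρ₁ ρ₂ : Measure G) [IsProbabilityMeasure ρ₁] [IsProbabilityMeasure ρ₂]
    (hmp : m.map p = ρ₁) (hmq : m.map q = ρ₂)
    (hρ₁ : ρ₁.map T = ρ₁) (hρ₂ : ρ₂.map T = ρ₂) :
    ksEntropy m S ≤ ksEntropy ρ₁ T + ksEntropy ρ₂ T := by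
  classical
  have hpc : Continuous p := by
    have : p = Prod.fst ∘ e := by funext w; rw [Function.comp_apply, he w]
    rw [this]; exact continuous_fst.comp e.continuous
  have hqc : Continuous q := by
    have : q = Prod.snd ∘ e := by funext w; rw [Function.comp_apply, he w]
    rw [this]; exact continuous_snd.comp e.continuous
  have hpm : Measurable p := hpc.measurable
  have hqm : Measurable q := hqc.measurable
  rw [ksEntropy]
  refine iSup_le fun k => iSup_le fun P => iSup_le fun hPmeas => ?_
  have hP : Mble P := mble_of_measurable hPmeas
  haveI : Nonempty (Fin k) := ⟨P (Classical.arbitrary _)⟩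
  obtain ⟨LP, hLP0, hLP⟩ := exists_rate hS hminv hP
  rw [limsup_ofReal_of_tendsto hLP]
  -- it suffices to bound by the RHS plus arbitrary ε
  refine ENNReal.le_of_forall_pos_le_add fun ε hε hlt => ?_
  -- choose δ by continuity of the Fano bound
  set φ : ℝ → ℝ := fun d => Real.negMulLog d + Real.negMulLog (1 - d)
    + d * Real.log k with hφ
  have hφc : Continuous φ := by
    apply Continuous.add
    apply Continuous.add Real.continuous_negMulLog
    · exact Real.continuous_negMulLog.comp (continuous_const.sub continuous_id)
    · exact continuous_id.mul continuous_const
  have hφ0 : φ 0 = 0 := by simp [hφ]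
  have htend : Tendsto φ (nhds 0) (nhds 0) := by
    have := hφc.continuousAt (x := 0)
    rwa [ContinuousAt, hφ0] at this
  obtain ⟨δ, hδpos, hδ⟩ := Metric.tendsto_nhds_nhds.mp htend ε (by exact_mod_cast hε)
  -- approximate the fibers of P
  set δ' : ℝ≥0∞ := ENNReal.ofReal (δ / (2 * (k + 1))) with hδ'
  have hδ'0 : δ' ≠ 0 := by
    rw [hδ']
    simp only [ne_eq, ENNReal.ofReal_eq_zero, not_le]
    positivity
  have happrox : ∀ i : Fin k, ∃ s : Finset (Set G × Set G),
      (∀ r ∈ s, IsOpen r.1 ∧ IsOpen r.2) ∧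
      m (symmDiff (P ⁻¹' {i}) (⋃ r ∈ s, e ⁻¹' (r.1 ×ˢ r.2))) < δ' := by
    intro i
    exact exists_rect_approx e m (P ⁻¹' {i}) (hP i) δ' hδ'0
  choose sfam hsopen hsapprox using happrox
  -- the combined families of open sets
  set 𝒲 : Finset (Set G) := (Finset.univ.biUnion sfam).image Prod.fst with h𝒲
  set 𝒵 : Finset (Set G) := (Finset.univ.biUnion sfam).image Prod.snd with h𝒵
  set u : G → ({W // W ∈ 𝒲} → Bool) :=
    fun x W => if x ∈ (W : Set G) then true else false with hu_def
  set v : G → ({W // W ∈ 𝒵} → Bool) :=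
    fun x W => if x ∈ (W : Set G) then true else false with hv_def
  have h𝒲open : ∀ W : {W // W ∈ 𝒲}, IsOpen (W : Set G) := by
    rintro ⟨W, hW⟩
    obtain ⟨r, hr, rfl⟩ := Finset.mem_image.mp hW
    obtain ⟨i, _, hri⟩ := Finset.mem_biUnion.mp hr
    exact (hsopen i r hri).1
  have h𝒵open : ∀ W : {W // W ∈ 𝒵}, IsOpen (W : Set G) := by
    rintro ⟨W, hW⟩
    obtain ⟨r, hr, rfl⟩ := Finset.mem_image.mp hW
    obtain ⟨i, _, hri⟩ := Finset.mem_biUnion.mp hr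
    exact (hsopen i r hri).2
  have hu : Mble u := by
    intro w
    have : u ⁻¹' {w} = ⋂ W : {W // W ∈ 𝒲},
        (if w W = true then (W : Set G) else (W : Set G)ᶜ) := by
      ext x
      simp only [Set.mem_preimage, Set.mem_singleton_iff, Set.mem_iInter]
      constructor
      · intro h W
        rw [← h]
        by_cases hx : x ∈ (W : Set G)
        · simp [hu_def, hx]
        · simp [hu_def, hx]
      · intro h
        funext W
        have hW := h W
        cases hww : w W
        · rw [if_neg (by simp [hww])] at hW
          simp only [hu_def]
          rw [if_neg (Set.mem_compl_iff _ _ |>.mp hW)]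
        · rw [if_pos (by simp [hww])] at hW
          simp only [hu_def]
          rw [if_pos hW]
    rw [this]
    exact MeasurableSet.iInter fun W => by
      split
      · exact (h𝒲open W).measurableSet
      · exact (h𝒲open W).isClosed_compl.measurableSet
  have hv : Mble v := by
    intro w
    have : v ⁻¹' {w} = ⋂ W : {W // W ∈ 𝒵},
        (if w W = true then (W : Set G) else (W : Set G)ᶜ) := by
      ext x
      simp only [Set.mem_preimage, Set.mem_singleton_iff, Set.mem_iInter]
      constructor
      · intro h W
        rw [← h]
        by_cases hx : x ∈ (W : Set G)
        · simp [hv_def, hx]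
        · simp [hv_def, hx]
      · intro h
        funext W
        have hW := h W
        cases hww : w W
        · rw [if_neg (by simp [hww])] at hW
          simp only [hv_def]
          rw [if_neg (Set.mem_compl_iff _ _ |>.mp hW)]
        · rw [if_pos (by simp [hww])] at hW
          simp only [hv_def]
          rw [if_pos hW]
    rw [this]
    exact MeasurableSet.iInter fun W => by
      split
      · exact (h𝒵open W).measurableSet
      · exact (h𝒵open W).isClosed_compl.measurableSet
  -- the joint pattern observable
  set R : G × G → ({W // W ∈ 𝒲} → Bool) × ({W // W ∈ 𝒵} → Bool) :=
    fun w => (u (p w), v (q w)) with hR_def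
  have hR : Mble R := (hu.comp_meas hpm).pair (hv.comp_meas hqm)
  -- the approximating sets, as cylinder sets of R
  set A : Fin k → Set (G × G) := fun i => ⋃ r ∈ sfam i, e ⁻¹' (r.1 ×ˢ r.2) with hA_def
  have hA_cyl : ∀ (i : Fin k) (w w' : G × G), R w = R w' → (w ∈ A i ↔ w' ∈ A i) := by
    intro i w w' hww
    have hu_eq : ∀ W : {W // W ∈ 𝒲}, (p w ∈ (W : Set G) ↔ p w' ∈ (W : Set G)) := by
      intro W
      have h1 : u (p w) W = u (p w') W := congrArg (fun z => z.1 W) hww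
      simp only [hu_def] at h1
      by_cases hx : p w ∈ (W : Set G) <;> by_cases hy : p w' ∈ (W : Set G) <;>
        simp_all
    have hv_eq : ∀ W : {W // W ∈ 𝒵}, (q w ∈ (W : Set G) ↔ q w' ∈ (W : Set G)) := by
      intro W
      have h1 : v (q w) W = v (q w') W := congrArg (fun z => z.2 W) hww
      simp only [hv_def] at h1
      by_cases hx : q w ∈ (W : Set G) <;> by_cases hy : q w' ∈ (W : Set G) <;>
        simp_all
    have hmem : ∀ r ∈ sfam i, (w ∈ e ⁻¹' (r.1 ×ˢ r.2) ↔ w' ∈ e ⁻¹' (r.1 ×ˢ r.2)) := by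
      intro r hr
      have hW : r.1 ∈ 𝒲 :=
        Finset.mem_image_of_mem _ (Finset.mem_biUnion.mpr ⟨i, Finset.mem_univ _, hr⟩)
      have hZ : r.2 ∈ 𝒵 :=
        Finset.mem_image_of_mem _ (Finset.mem_biUnion.mpr ⟨i, Finset.mem_univ _, hr⟩)
      have hew : e w = (p w, q w) := he w
      have hew' : e w' = (p w', q w') := he w'
      simp only [Set.mem_preimage, hew, hew', Set.mem_prod]
      rw [hu_eq ⟨r.1, hW⟩, hv_eq ⟨r.2, hZ⟩]
    simp only [hA_def, Set.mem_iUnion₂]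
    constructor
    · rintro ⟨r, hr, hmr⟩; exact ⟨r, hr, (hmem r hr).1 hmr⟩
    · rintro ⟨r, hr, hmr⟩; exact ⟨r, hr, (hmem r hr).2 hmr⟩
  -- the decoder
  set ψ : ({W // W ∈ 𝒲} → Bool) × ({W // W ∈ 𝒵} → Bool) → Fin k :=
    fun rr => if h : ∃ i : Fin k, ∀ w : G × G, R w = rr → w ∈ A i then h.choose
      else Classical.arbitrary _ with hψ_def
  set Q : G × G → Fin k := fun w => ψ (R w) with hQ_def
  -- error bound
  have herr_sub : {w : G × G | P w ≠ Q w} ⊆ ⋃ i : Fin k, symmDiff (P ⁻¹' {i}) (A i) := by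
    intro w hw
    simp only [Set.mem_setOf_eq] at hw
    by_cases hwA : w ∈ A (P w) ∧ ∀ j : Fin k, j ≠ P w → w ∉ A j
    · exfalso
      apply hw
      have hex : ∃ i : Fin k, ∀ w' : G × G, R w' = R w → w' ∈ A i :=
        ⟨P w, fun w' hww' => (hA_cyl (P w) w' w hww').2 hwA.1⟩
      have hch := hex.choose_spec w rfl
      have : hex.choose = P w := by
        by_contra hne
        exact hwA.2 _ hne hch
      rw [hQ_def, hψ_def]
      simp only [dif_pos hex]
      exact this.symm
    · push_neg at hwA
      by_cases hmem : w ∈ A (P w)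
      · obtain ⟨j, hjne, hjA⟩ := hwA hmem
        refine Set.mem_iUnion.2 ⟨j, ?_⟩
        rw [Set.symmDiff_def]
        right
        exact ⟨hjA, by simp [Ne.symm hjne]⟩
      · refine Set.mem_iUnion.2 ⟨P w, ?_⟩
        rw [Set.symmDiff_def]
        left
        exact ⟨rfl, hmem⟩
  have herr_bound : m {w : G × G | P w ≠ Q w} ≤ (k : ℝ≥0∞) * δ' := by
    calc m {w : G × G | P w ≠ Q w} ≤ m (⋃ i : Fin k, symmDiff (P ⁻¹' {i}) (A i)) :=
          measure_mono herr_sub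
      _ ≤ ∑ i : Fin k, m (symmDiff (P ⁻¹' {i}) (A i)) := measure_iUnion_fintype_le _ _
      _ ≤ ∑ _i : Fin k, δ' := Finset.sum_le_sum (fun i _ => (hsapprox i).le)
      _ = (k : ℝ≥0∞) * δ' := by rw [Finset.sum_const, Finset.card_univ, Fintype.card_fin,
            nsmul_eq_mul]
  -- the error probability
  set err : ℝ := pw m (fun w => decide (P w = Q w)) false with herr_def
  have herrset : (fun w => decide (P w = Q w)) ⁻¹' {false} = {w : G × G | P w ≠ Q w} := by
    ext w
    simp [decide_eq_false_iff_not]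
  have hk1 : 1 ≤ k := Nat.one_le_iff_ne_zero.mpr (by
    rintro rfl
    exact (Classical.arbitrary (Fin 0)).elim0)
  have herr_le : err < δ := by
    have h1 : err ≤ ((k : ℝ≥0∞) * δ').toReal := by
      rw [herr_def, pw, herrset]
      refine ENNReal.toReal_mono ?_ herr_bound
      rw [hδ']
      exact ENNReal.mul_ne_top (ENNReal.natCast_ne_top k) ENNReal.ofReal_ne_top
    have h2 : ((k : ℝ≥0∞) * δ').toReal = (k : ℝ) * (δ / (2 * (k + 1))) := by
      rw [ENNReal.toReal_mul, hδ', ENNReal.toReal_ofReal (by positivity)]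
      simp
    have h3 : (k : ℝ) * (δ / (2 * (k + 1))) < δ := by
      rw [div_eq_mul_inv]
      have hkpos : (0 : ℝ) < 2 * ((k : ℝ) + 1) := by positivity
      rw [show (k : ℝ) * (δ * (2 * ((k : ℝ) + 1))⁻¹) = δ * ((k : ℝ) / (2 * ((k : ℝ) + 1)))
        by field_simp]
      have : (k : ℝ) / (2 * ((k : ℝ) + 1)) < 1 := by
        rw [div_lt_one hkpos]
        nlinarith [Nat.cast_nonneg (α := ℝ) k]
      nlinarith [hδpos]
    calc err ≤ _ := h1
      _ = _ := h2
      _ < δ := h3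
  have herr_nonneg : 0 ≤ err := pw_nonneg
  -- Fano chain
  have hQ : Mble Q := hR.comp ψ
  have hfano := condH_fano (μ := m) hP hQ
  have hcoarse := condH_coarsen (μ := m) ψ hP hR
  have hQeq : (fun x : G × G => ψ (R x)) = Q := rfl
  rw [hQeq] at hcoarse
  have hQeq2 : (fun x : G × G => (P x, ψ (R x))) = (fun x => (P x, Q x)) := rfl
  rw [hQeq2] at hcoarse
  rw [Fintype.card_fin] at hfano
  have hφerr : φ err < (ε : ℝ) := by
    have hd : dist err 0 < δ := by
      rw [Real.dist_eq, sub_zero, abs_of_nonneg herr_nonneg]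
      exact herr_le
    have := hδ hd
    rw [Real.dist_eq, sub_zero] at this
    calc φ err ≤ |φ err| := le_abs_self _
      _ < (ε : ℝ) := this
  have hcond_small : partitionEntropy m (fun x => (P x, R x)) - partitionEntropy m R
      ≤ φ err := by
    refine hcoarse.trans (hfano.trans_eq ?_)
    rw [hφ]
  -- rates
  obtain ⟨LR, hLR0, hLR⟩ := exists_rate hS hminv hR
  have hchain := rate_le_rate_add_cond hS hminv hP hR hLP hLR
  obtain ⟨Lu, hLu0, hLu⟩ := exists_rate (μ := ρ₁) hT hρ₁ hu
  obtain ⟨Lv, hLv0, hLv⟩ := exists_rate (μ := ρ₂) hT hρ₂ hv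
  have hup : ∀ n, processEntropy m S (u ∘ p) n = processEntropy ρ₁ T u n := by
    intro n
    rw [processEntropy_def, processEntropy_def]
    have h1 : partitionEntropy ρ₁ (procObs T u n) = partitionEntropy m (procObs T u n ∘ p) :=
      partitionEntropy_map (hu.proc hT n) hpm hmp
    have h2 : procObs T u n ∘ p = procObs S (u ∘ p) n := by
      funext x
      funext i
      exact congrArg u (iterate_comm hcp (i : ℕ) x)
    rw [h1, h2]
  have hvq : ∀ n, processEntropy m S (v ∘ q) n = processEntropy ρ₂ T v n := by
    intro n
    rw [processEntropy_def, processEntropy_def]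
    have h1 : partitionEntropy ρ₂ (procObs T v n) = partitionEntropy m (procObs T v n ∘ q) :=
      partitionEntropy_map (hv.proc hT n) hqm hmq
    have h2 : procObs T v n ∘ q = procObs S (v ∘ q) n := by
      funext x
      funext i
      exact congrArg v (iterate_comm hcq (i : ℕ) x)
    rw [h1, h2]
  have hLu' : Tendsto (fun n : ℕ => processEntropy m S (u ∘ p) n / n) atTop (𝓝 Lu) := by
    have : (fun n : ℕ => processEntropy m S (u ∘ p) n / n)
        = fun n : ℕ => processEntropy ρ₁ T u n / n := by
      funext n; rw [hup n]
    rw [this]; exact hLu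
  have hLv' : Tendsto (fun n : ℕ => processEntropy m S (v ∘ q) n / n) atTop (𝓝 Lv) := by
    have : (fun n : ℕ => processEntropy m S (v ∘ q) n / n)
        = fun n : ℕ => processEntropy ρ₂ T v n / n := by
      funext n; rw [hvq n]
    rw [this]; exact hLv
  have hLR_le : LR ≤ Lu + Lv := by
    refine le_of_tendsto_of_tendsto hLR (hLu'.add hLv') ?_
    filter_upwards [eventually_ge_atTop 1] with n hn
    have hn' : (0 : ℝ) < n := by exact_mod_cast hn
    have hsplit := processEntropy_pair_le_proc (μ := m) hS (hu.comp_meas hpm)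
      (hv.comp_meas hqm) n
    have hReq : (fun x : G × G => ((u ∘ p) x, (v ∘ q) x)) = R := rfl
    rw [hReq] at hsplit
    rw [← add_div]
    exact (div_le_div_iff_of_pos_right hn').mpr hsplit
  -- put everything together
  have hLP_le : LP ≤ Lu + Lv + φ err := by
    have := hchain
    linarith
  have herr_le1 : err ≤ 1 := pw_le_one
  have hφ_nonneg : 0 ≤ φ err := by
    have h1 : 0 ≤ Real.negMulLog err := Real.negMulLog_nonneg herr_nonneg herr_le1
    have h2 : 0 ≤ Real.negMulLog (1 - err) :=
      Real.negMulLog_nonneg (by linarith) (by linarith)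
    have h3 : 0 ≤ err * Real.log k := by
      apply mul_nonneg herr_nonneg
      apply Real.log_nonneg
      exact_mod_cast hk1
    rw [hφ]
    positivity
  calc ENNReal.ofReal LP ≤ ENNReal.ofReal (Lu + Lv + φ err) := ENNReal.ofReal_le_ofReal hLP_le
    _ ≤ ENNReal.ofReal (Lu + Lv) + ENNReal.ofReal (φ err) := ENNReal.ofReal_add_le
    _ ≤ ENNReal.ofReal Lu + ENNReal.ofReal Lv + ENNReal.ofReal (φ err) := by
        gcongr
        exact ENNReal.ofReal_add_le
    _ ≤ ksEntropy ρ₁ T + ksEntropy ρ₂ T + ε := by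
        gcongr
        · exact rate_le_ksEntropy hT hρ₁ hu hLu
        · exact rate_le_ksEntropy hT hρ₂ hv hLv
        · calc ENNReal.ofReal (φ err) ≤ ENNReal.ofReal (ε : ℝ) :=
              ENNReal.ofReal_le_ofReal hφerr.le
            _ = (ε : ℝ≥0∞) := ENNReal.ofReal_coe_nnreal

end Joining
section Lower

/-- Lower bound: entropies of the marginal systems add up to at most the entropy
of the product system. -/
lemma ksEntropy_add_le_prod {Y Z : Type*} [MeasurableSpace Y] [MeasurableSpace Z]
    {μ : Measure Y} {ν : Measure Z} [IsProbabilityMeasure μ] [IsProbabilityMeasure ν]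
    {Ty : Y → Y} {Tz : Z → Z} (hTy : Measurable Ty) (hTz : Measurable Tz)
    (hμinv : μ.map Ty = μ) (hνinv : ν.map Tz = ν) :
    ksEntropy μ Ty + ksEntropy ν Tz
      ≤ ksEntropy (μ.prod ν) (fun w : Y × Z => (Ty w.1, Tz w.2)) := by
  set S : Y × Z → Y × Z := fun w => (Ty w.1, Tz w.2) with hS_def
  have hS : Measurable S := (hTy.comp measurable_fst).prodMk (hTz.comp measurable_snd)
  have hminv : (μ.prod ν).map S = μ.prod ν := by
    have h1 : S = Prod.map Ty Tz := rfl
    rw [h1, ← Measure.map_prod_map _ _ hTy hTz, hμinv, hνinv]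
  have hfst : ksEntropy μ Ty ≤ ksEntropy (μ.prod ν) S := by
    have hmap : (μ.prod ν).map Prod.fst = μ := by
      rw [Measure.map_fst_prod, measure_univ, one_smul]
    have h := ksEntropy_map_le (lam := μ.prod ν) measurable_fst hS hTy (fun w => rfl)
    rwa [hmap] at h
  have hsnd : ksEntropy ν Tz ≤ ksEntropy (μ.prod ν) S := by
    have hmap : (μ.prod ν).map Prod.snd = ν := by
      rw [Measure.map_snd_prod, measure_univ, one_smul]
    have h := ksEntropy_map_le (lam := μ.prod ν) measurable_snd hS hTz (fun w => rfl)
    rwa [hmap] at h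
  refine ksEntropy_add_le_of_le hsnd (fun k f hf => ?_)
  rw [add_comm]
  refine ksEntropy_add_le_of_le ?_ (fun k' g hg => ?_)
  · have h1 : Filter.limsup
        (fun n : ℕ => ENNReal.ofReal (processEntropy μ Ty f n / n)) Filter.atTop
        ≤ ksEntropy μ Ty := by
      rw [ksEntropy]
      exact le_iSup_of_le k (le_iSup_of_le f (le_iSup_of_le hf le_rfl))
    exact h1.trans hfst
  · obtain ⟨Lf, hLf0, hLf⟩ := exists_rate hTy hμinv (mble_of_measurable hf)
    obtain ⟨Lg, hLg0, hLg⟩ := exists_rate hTz hνinv (mble_of_measurable hg)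
    rw [limsup_ofReal_of_tendsto hLf, limsup_ofReal_of_tendsto hLg,
      ← ENNReal.ofReal_add hLg0 hLf0]
    have hF : Mble (fun w : Y × Z => (f w.1, g w.2)) :=
      ((mble_of_measurable hf).comp_meas measurable_fst).pair
        ((mble_of_measurable hg).comp_meas measurable_snd)
    have hLF : Tendsto
        (fun n : ℕ => processEntropy (μ.prod ν) S (fun w : Y × Z => (f w.1, g w.2)) n / n)
        atTop (𝓝 (Lg + Lf)) := by
      have heq : (fun n : ℕ =>
          processEntropy (μ.prod ν) S (fun w : Y × Z => (f w.1, g w.2)) n / n)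
          = fun n : ℕ => processEntropy μ Ty f n / n + processEntropy ν Tz g n / n := by
        funext n
        rw [processEntropy_prod hTy hTz (mble_of_measurable hf) (mble_of_measurable hg) n,
          add_div]
      rw [heq, show Lg + Lf = Lf + Lg from add_comm _ _]
      exact hLf.add hLg
    exact rate_le_ksEntropy hS hminv hF hLF

end Lower

theorem entropy_le_entropy_mconv {G : Type*} [Group G] [TopologicalSpace G]
    [IsTopologicalGroup G] [CompactSpace G] [TopologicalSpace.MetrizableSpace G]
    [MeasurableSpace G] [BorelSpace G]
    (T : G → G) (hTcont : Continuous T) (hThom : ∀ x y : G, T (x * y) = T x * T y)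
    (μ ν : Measure G) [IsProbabilityMeasure μ] [IsProbabilityMeasure ν]
    (hμ : μ.map T = μ) (hν : ν.map T = ν) :
    (ksEntropy μ T < ⊤ → ksEntropy ν T ≤ ksEntropy (μ.mconv ν) T) ∧
    (ksEntropy ν T < ⊤ → ksEntropy μ T ≤ ksEntropy (μ.mconv ν) T) := by
  have hT : Measurable T := hTcont.measurable
  set S : G × G → G × G := fun w => (T w.1, T w.2) with hS_def
  have hS : Measurable S := (hT.comp measurable_fst).prodMk (hT.comp measurable_snd)
  have hminv : (μ.prod ν).map S = μ.prod ν := by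
    have h1 : S = Prod.map T T := rfl
    rw [h1, ← Measure.map_prod_map _ _ hT hT, hμ, hν]
  have hmulc : Continuous (fun w : G × G => w.1 * w.2) := continuous_fst.mul continuous_snd
  have hmul : Measurable (fun w : G × G => w.1 * w.2) := hmulc.measurable
  have hconv_def : μ.mconv ν = (μ.prod ν).map (fun w : G × G => w.1 * w.2) := rfl
  haveI : IsProbabilityMeasure (μ.mconv ν) := by
    rw [hconv_def]
    exact Measure.isProbabilityMeasure_map hmul.aemeasurable
  have hconv_inv : (μ.mconv ν).map T = μ.mconv ν := by
    rw [hconv_def, Measure.map_map hT hmul]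
    have h2 : T ∘ (fun w : G × G => w.1 * w.2) = (fun w : G × G => w.1 * w.2) ∘ S := by
      funext w
      exact hThom w.1 w.2
    rw [h2, ← Measure.map_map hmul hS, hminv]
  have hm_fst : (μ.prod ν).map Prod.fst = μ := by
    rw [Measure.map_fst_prod, measure_univ, one_smul]
  have hm_snd : (μ.prod ν).map Prod.snd = ν := by
    rw [Measure.map_snd_prod, measure_univ, one_smul]
  -- the two skew homeomorphisms
  set Φ₁ : (G × G) ≃ₜ (G × G) :=
    { toFun := fun w => (w.1, w.1 * w.2)
      invFun := fun w => (w.1, w.1⁻¹ * w.2)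
      left_inv := fun w => by simp
      right_inv := fun w => by simp
      continuous_toFun := continuous_fst.prodMk (continuous_fst.mul continuous_snd)
      continuous_invFun := continuous_fst.prodMk (continuous_fst.inv.mul continuous_snd) }
    with hΦ₁
  set Φ₂ : (G × G) ≃ₜ (G × G) :=
    { toFun := fun w => (w.2, w.1 * w.2)
      invFun := fun w => (w.2 * w.1⁻¹, w.1)
      left_inv := fun w => by simp
      right_inv := fun w => by simp
      continuous_toFun := continuous_snd.prodMk (continuous_fst.mul continuous_snd)
      continuous_invFun :=
        (continuous_snd.mul continuous_fst.inv).prodMk continuous_fst }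
    with hΦ₂
  have hlow := ksEntropy_add_le_prod hT hT hμ hν
  have hup1 := ksEntropy_le_add_of_joining (μ.prod ν) S hS hminv T hT
    Prod.fst (fun w => w.1 * w.2) Φ₁ (fun w => rfl) (fun w => rfl)
    (fun w => hThom w.1 w.2) μ (μ.mconv ν) hm_fst hconv_def.symm hμ hconv_inv
  have hup2 := ksEntropy_le_add_of_joining (μ.prod ν) S hS hminv T hT
    Prod.snd (fun w => w.1 * w.2) Φ₂ (fun w => rfl) (fun w => rfl)
    (fun w => hThom w.1 w.2) ν (μ.mconv ν) hm_snd hconv_def.symm hν hconv_inv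
  constructor
  · intro hfin
    have h := le_trans hlow hup1
    exact (ENNReal.add_le_add_iff_left hfin.ne).mp h
  · intro hfin
    have h := le_trans hlow hup2
    rw [add_comm (ksEntropy μ T) (ksEntropy ν T)] at h
    exact (ENNReal.add_le_add_iff_left hfin.ne).mp h
end

section
/- In the group-extension setting, assume μ₀ ∈ M(T₀) is ergodic with respect to T₀. Then: (1) M(T₁, μ₀) is a convex set; (2) M(T₁, μ₀) is closed in the weak* topology on Borel probability measures on G₁; (3) the extreme points of M(T₁, μ₀) are exactly the measures in M(T₁, μ₀) that are ergodic with respect to T₁. -/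
open MeasureTheory Filter
open scoped ENNReal

/-- `M(T, μ₀)`: the set of `T`-invariant Borel probability measures projecting to `μ₀`
under the factor map `φ`. -/
def MInvProj {X Y : Type*} [MeasurableSpace X] [MeasurableSpace Y]
    (T : X → X) (φ : X → Y) (μ₀ : Measure Y) : Set (Measure X) :=
  {μ | IsProbabilityMeasure μ ∧ μ.map T = μ ∧ μ.map φ = μ₀}

section Aux

variable {X : Type*} [MeasurableSpace X]

/-- Pushing forward a `withDensity` measure through a measurable equivalence. -/
lemma mapWithDensityEquiv (e : X ≃ᵐ X) (μ : Measure X) {f : X → ℝ≥0∞} (hf : Measurable f) :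
    (μ.withDensity f).map e = (μ.map e).withDensity (f ∘ ⇑e.symm) := by
  ext s hs
  rw [Measure.map_apply e.measurable hs, withDensity_apply _ (e.measurable hs),
    withDensity_apply _ hs, setLIntegral_map hs (hf.comp e.symm.measurable) e.measurable]
  refine setLIntegral_congr_fun (e.measurable hs) (fun x _ => ?_)
  simp

/-- If `μ` is ergodic for a measurable automorphism `e` and `ν` is an `e`-invariant
probability measure absolutely continuous w.r.t. `μ`, then `ν = μ`. -/
lemma ergodic_unique_abs_cont (e : X ≃ᵐ X) {μ ν : Measure X}
    [IsProbabilityMeasure μ] [IsProbabilityMeasure ν]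
    (herg : Ergodic ⇑e μ) (hν : ν.map ⇑e = ν) (hac : ν ≪ μ) : ν = μ := by
  have hμ : μ.map ⇑e = μ := herg.toMeasurePreserving.map_eq
  have hfm : Measurable (ν.rnDeriv μ) := Measure.measurable_rnDeriv ν μ
  have hνd : μ.withDensity (ν.rnDeriv μ) = ν := Measure.withDensity_rnDeriv_eq ν μ hac
  have hμs : μ.map ⇑e.symm = μ := by
    conv_lhs => rw [← hμ]
    exact MeasurableEquiv.map_symm_map e
  have hνs : ν.map ⇑e.symm = ν := by
    conv_lhs => rw [← hν]
    exact MeasurableEquiv.map_symm_map e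
  have h2 : μ.withDensity ((ν.rnDeriv μ) ∘ ⇑e) = ν := by
    have h := mapWithDensityEquiv e.symm μ hfm
    rw [hμs] at h
    simp only [MeasurableEquiv.symm_symm] at h
    rw [← h, hνd, hνs]
  have hkey : (ν.rnDeriv μ) ∘ ⇑e =ᵐ[μ] ν.rnDeriv μ := by
    rw [← withDensity_eq_iff_of_sigmaFinite (hfm.comp e.measurable).aemeasurable hfm.aemeasurable]
    rw [h2, hνd]
  obtain ⟨c, hc⟩ := herg.ae_eq_const_of_ae_eq_comp₀ hfm.nullMeasurable hkey
  have hν_eq : ν = c • μ := by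
    rw [← hνd, withDensity_congr_ae hc]
    exact withDensity_const c
  have hc1 : c = 1 := by
    have h := congrArg (fun m : Measure X => m Set.univ) hν_eq
    simpa [measure_univ] using h.symm
  rw [hν_eq, hc1, one_smul]

end Aux

/-- Lemma 3.1: in the group-extension setting (compact metrizable group `G₁`, closed normal
subgroup `G₂`, homeomorphism `T₁` commuting with the `G₂`-action via the automorphism `T₂`,
induced map `T₀` on the quotient), if `μ₀ ∈ M(T₀)` is ergodic then `M(T₁, μ₀)` is convex,
weak*-closed, and its extreme points are exactly its `T₁`-ergodic members. -/
theorem MInvProj_convex_closed_extreme {G₁ : Type*} [Group G₁] [TopologicalSpace G₁]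
    [IsTopologicalGroup G₁] [CompactSpace G₁] [TopologicalSpace.MetrizableSpace G₁]
    [MeasurableSpace G₁] [BorelSpace G₁]
    (G₂ : Subgroup G₁) [G₂.Normal] (hG₂closed : IsClosed (G₂ : Set G₁))
    (T₁ : G₁ ≃ₜ G₁) (T₂ : G₂ ≃* G₂) (hT₂cont : Continuous T₂)
    (hcomm : ∀ (y : G₂) (x : G₁), T₁ ((y : G₁) * x) = (T₂ y : G₁) * T₁ x)
    (T₀ : G₁ ⧸ G₂ → G₁ ⧸ G₂)
    (hT₀ : ∀ x : G₁, T₀ (QuotientGroup.mk x) = QuotientGroup.mk (T₁ x))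
    (μ₀ : Measure (G₁ ⧸ G₂)) [IsProbabilityMeasure μ₀] (hμ₀erg : Ergodic T₀ μ₀) :
    -- (1) `M(T₁, μ₀)` is convex
    (∀ μ ∈ MInvProj (⇑T₁) (QuotientGroup.mk (s := G₂)) μ₀,
      ∀ ν ∈ MInvProj (⇑T₁) (QuotientGroup.mk (s := G₂)) μ₀,
      ∀ a b : ℝ≥0∞, a + b = 1 →
        a • μ + b • ν ∈ MInvProj (⇑T₁) (QuotientGroup.mk (s := G₂)) μ₀) ∧
    -- (2) `M(T₁, μ₀)` is closed in the weak* topology on Borel probability measures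
    IsClosed {μ : ProbabilityMeasure G₁ |
      (μ : Measure G₁) ∈ MInvProj (⇑T₁) (QuotientGroup.mk (s := G₂)) μ₀} ∧
    -- (3) the extreme points of `M(T₁, μ₀)` are exactly its `T₁`-ergodic members
    (∀ μ ∈ MInvProj (⇑T₁) (QuotientGroup.mk (s := G₂)) μ₀,
      (Ergodic (⇑T₁) μ ↔
        ∀ μ₁ ∈ MInvProj (⇑T₁) (QuotientGroup.mk (s := G₂)) μ₀,
        ∀ μ₂ ∈ MInvProj (⇑T₁) (QuotientGroup.mk (s := G₂)) μ₀,
        ∀ a b : ℝ≥0∞, 0 < a → 0 < b → a + b = 1 → μ = a • μ₁ + b • μ₂ →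
          μ₁ = μ ∧ μ₂ = μ)) := by
  haveI : PolishSpace G₁ := by
    letI := TopologicalSpace.metrizableSpaceMetric G₁
    infer_instance
  haveI := hG₂closed
  set π : G₁ → G₁ ⧸ G₂ := QuotientGroup.mk (s := G₂) with hπdef
  have hπm : Measurable π := QuotientGroup.measurable_coe
  have hπc : Continuous π := continuous_quotient_mk'
  have hT₁m : Measurable ⇑T₁ := T₁.continuous.measurable
  have hT₀π : T₀ ∘ π = π ∘ ⇑T₁ := funext fun x => hT₀ x
  have hT₀m : Measurable T₀ := by
    rw [QuotientGroup.measurable_from_quotient]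
    show Measurable (T₀ ∘ π)
    rw [hT₀π]
    exact hπm.comp hT₁m
  have hT₀c : Continuous T₀ := by
    rw [(QuotientGroup.isQuotientMap_mk G₂).continuous_iff]
    show Continuous (T₀ ∘ π)
    rw [hT₀π]
    exact hπc.comp T₁.continuous
  -- invariance of T₁-symm
  have hcomm' : ∀ (y : G₂) (x : G₁),
      T₁.symm ((y : G₁) * x) = (T₂.symm y : G₁) * T₁.symm x := by
    intro y x
    apply T₁.injective
    rw [T₁.apply_symm_apply, hcomm (T₂.symm y) (T₁.symm x), T₂.apply_symm_apply,
      T₁.apply_symm_apply]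
  -- T₀ is bijective
  have hT₀surj : Function.Surjective T₀ := by
    intro q
    obtain ⟨x, rfl⟩ := QuotientGroup.mk_surjective q
    exact ⟨QuotientGroup.mk (T₁.symm x), by rw [hT₀, T₁.apply_symm_apply]⟩
  have hT₀inj : Function.Injective T₀ := by
    intro p q h
    obtain ⟨x, rfl⟩ := QuotientGroup.mk_surjective p
    obtain ⟨y, rfl⟩ := QuotientGroup.mk_surjective q
    rw [hT₀, hT₀, QuotientGroup.eq] at h
    rw [QuotientGroup.eq]
    -- h : (T₁ x)⁻¹ * T₁ y ∈ G₂
    have hg' : T₁ x * ((T₁ x)⁻¹ * T₁ y) * (T₁ x)⁻¹ ∈ G₂ :=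
      Subgroup.Normal.conj_mem ‹G₂.Normal› _ h (T₁ x)
    have hyx : T₁ y = (⟨_, hg'⟩ : G₂) * T₁ x := by group
    have hy : y = (T₂.symm ⟨_, hg'⟩ : G₂) * x := by
      have := congrArg T₁.symm hyx
      rwa [T₁.symm_apply_apply, hcomm', T₁.symm_apply_apply] at this
    have hmem : ((T₂.symm ⟨_, hg'⟩ : G₂) : G₁) ∈ G₂ := (T₂.symm ⟨_, hg'⟩).2
    have : x⁻¹ * ((T₂.symm ⟨_, hg'⟩ : G₂) : G₁) * x ∈ G₂ :=
      Subgroup.Normal.conj_mem' ‹G₂.Normal› _ hmem x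
    rw [hy, ← mul_assoc]
    exact this
  -- T₀ as a measurable equivalence
  let T₀h : (G₁ ⧸ G₂) ≃ₜ (G₁ ⧸ G₂) :=
    Continuous.homeoOfEquivCompactToT2 (f := Equiv.ofBijective T₀ ⟨hT₀inj, hT₀surj⟩) hT₀c
  let e₀ : (G₁ ⧸ G₂) ≃ᵐ (G₁ ⧸ G₂) := T₀h.toMeasurableEquiv
  have he₀ : ⇑e₀ = T₀ := rfl
  -- transfer of invariance to the quotient
  have htrans : ∀ m : Measure G₁, m.map ⇑T₁ = m → (m.map π).map T₀ = m.map π := by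
    intro m hm
    rw [Measure.map_map hT₀m hπm, hT₀π, ← Measure.map_map hπm hT₁m, hm]
  -- the three statements
  refine ⟨?_, ?_, ?_⟩
  · -- (1) convexity
    rintro μ ⟨hμp, hμT, hμπ⟩ ν ⟨hνp, hνT, hνπ⟩ a b hab
    haveI := hμp; haveI := hνp
    refine ⟨⟨?_⟩, ?_, ?_⟩
    · simp [measure_univ, hab]
    · rw [Measure.map_add _ _ hT₁m, Measure.map_smul, Measure.map_smul, hμT, hνT]
    · rw [Measure.map_add _ _ hπm, Measure.map_smul, Measure.map_smul, hμπ, hνπ, ← add_smul,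
        hab, one_smul]
  · -- (2) closedness
    have hset : {μ : ProbabilityMeasure G₁ |
        (μ : Measure G₁) ∈ MInvProj (⇑T₁) (QuotientGroup.mk (s := G₂)) μ₀}
        = {μ : ProbabilityMeasure G₁ | μ.map T₁.continuous.measurable.aemeasurable = μ}
          ∩ ((fun μ : ProbabilityMeasure G₁ => μ.map hπc.measurable.aemeasurable) ⁻¹'
              {(⟨μ₀, inferInstance⟩ : ProbabilityMeasure (G₁ ⧸ G₂))}) := by
      ext μ
      simp only [Set.mem_setOf_eq, Set.mem_inter_iff, Set.mem_preimage, Set.mem_singleton_iff,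
        MInvProj]
      change _ ↔ _ ∧ μ.map hπc.measurable.aemeasurable =
        (@id (ProbabilityMeasure (G₁ ⧸ G₂)) ⟨μ₀, inferInstance⟩)
      rw [← ProbabilityMeasure.toMeasure_injective.eq_iff,
        ← ProbabilityMeasure.toMeasure_injective.eq_iff,
        ProbabilityMeasure.toMeasure_map, ProbabilityMeasure.toMeasure_map]
      exact ⟨fun ⟨_, h1, h2⟩ => ⟨h1, h2⟩, fun ⟨h1, h2⟩ => ⟨μ.2, h1, h2⟩⟩
    rw [hset]
    exact (isClosed_eq (ProbabilityMeasure.continuous_map T₁.continuous) continuous_id).inter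
      (isClosed_singleton.preimage (ProbabilityMeasure.continuous_map hπc))
  · -- (3) extreme points = ergodic measures
    rintro μ ⟨hμp, hμT, hμπ⟩
    haveI := hμp
    have key : ∀ ν : Measure G₁, IsProbabilityMeasure ν → ν.map ⇑T₁ = ν → ν ≪ μ →
        Ergodic ⇑T₁ μ → ν = μ := by
      intro ν hν hinv hac herg
      haveI := hν
      have hco : ⇑T₁.toMeasurableEquiv = ⇑T₁ := Homeomorph.toMeasurableEquiv_coe T₁
      refine ergodic_unique_abs_cont T₁.toMeasurableEquiv ?_ ?_ hac
      · rw [hco]; exact herg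
      · rw [hco]; exact hinv
    constructor
    · -- ergodic → extreme
      intro herg μ₁ hμ₁ μ₂ hμ₂ a b ha hb hab heq
      obtain ⟨hμ₁p, hμ₁T, _⟩ := hμ₁
      obtain ⟨hμ₂p, hμ₂T, _⟩ := hμ₂
      have hac : ∀ (c : ℝ≥0∞) (m m' : Measure G₁), 0 < c → μ = c • m + m' → m ≪ μ := by
        intro c m m' hc hdec
        refine Measure.AbsolutelyContinuous.mk fun s hs h0 => ?_
        rw [hdec] at h0
        simp only [Measure.add_apply, Measure.smul_apply, smul_eq_mul, add_eq_zero,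
          mul_eq_zero] at h0
        exact h0.1.resolve_left hc.ne'
      refine ⟨key μ₁ hμ₁p hμ₁T (hac a μ₁ (b • μ₂) ha heq) herg,
        key μ₂ hμ₂p hμ₂T (hac b μ₂ (a • μ₁) hb (by rw [heq, add_comm])) herg⟩
    · -- extreme → ergodic
      intro H
      refine ⟨⟨hT₁m, hμT⟩, ⟨fun s hs hsinv => ?_⟩⟩
      rw [Filter.eventuallyConst_set']
      by_contra hcon
      rw [not_or] at hcon
      obtain ⟨h1', h2'⟩ := hcon
      rw [ae_eq_empty] at h1'
      rw [ae_eq_univ] at h2'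
      have haT : μ s ≠ ∞ := measure_ne_top μ s
      have hbT : μ sᶜ ≠ ∞ := measure_ne_top μ sᶜ
      have hab : μ s + μ sᶜ = 1 := by rw [measure_add_measure_compl hs, measure_univ]
      -- invariance of restrictions
      have hresmap : ∀ t : Set G₁, MeasurableSet t → ⇑T₁ ⁻¹' t = t →
          (μ.restrict t).map ⇑T₁ = μ.restrict t := by
        intro t ht hinv
        ext B hB
        rw [Measure.map_apply hT₁m hB, Measure.restrict_apply hB,
          Measure.restrict_apply (hT₁m hB)]
        have hBt : ⇑T₁ ⁻¹' B ∩ t = ⇑T₁ ⁻¹' (B ∩ t) := by rw [Set.preimage_inter, hinv]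
        rw [hBt, ← Measure.map_apply hT₁m (hB.inter ht), hμT]
      set μA : Measure G₁ := (μ s)⁻¹ • μ.restrict s with hμA
      set μB : Measure G₁ := (μ sᶜ)⁻¹ • μ.restrict sᶜ with hμB
      have hAp : IsProbabilityMeasure μA := by
        constructor
        rw [hμA, Measure.smul_apply, Measure.restrict_apply_univ, smul_eq_mul]
        exact ENNReal.inv_mul_cancel h1' haT
      have hBp : IsProbabilityMeasure μB := by
        constructor
        rw [hμB, Measure.smul_apply, Measure.restrict_apply_univ, smul_eq_mul]
        exact ENNReal.inv_mul_cancel h2' hbT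
      haveI := hAp; haveI := hBp
      have hAT : μA.map ⇑T₁ = μA := by
        rw [hμA, Measure.map_smul, hresmap s hs hsinv]
      have hBT : μB.map ⇑T₁ = μB := by
        rw [hμB, Measure.map_smul, hresmap sᶜ hs.compl (by rw [Set.preimage_compl, hsinv])]
      have hsum : μ s • μA + μ sᶜ • μB = μ := by
        rw [hμA, hμB, smul_smul, smul_smul, ENNReal.mul_inv_cancel h1' haT,
          ENNReal.mul_inv_cancel h2' hbT, one_smul, one_smul,
          Measure.restrict_add_restrict_compl hs]
      -- projections to the quotient
      haveI : IsProbabilityMeasure (μA.map π) := Measure.isProbabilityMeasure_map hπm.aemeasurable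
      haveI : IsProbabilityMeasure (μB.map π) := Measure.isProbabilityMeasure_map hπm.aemeasurable
      have hsplit : μ s • μA.map π + μ sᶜ • μB.map π = μ₀ := by
        rw [← Measure.map_smul, ← Measure.map_smul, ← Measure.map_add _ _ hπm, hsum, hμπ]
      have hACnu : ∀ (c : ℝ≥0∞) (m m' : Measure (G₁ ⧸ G₂)), c ≠ 0 → c • m + m' = μ₀ →
          m ≪ μ₀ := by
        intro c m m' hc hdec
        refine Measure.AbsolutelyContinuous.mk fun t ht h0 => ?_
        rw [← hdec] at h0
        simp only [Measure.add_apply, Measure.smul_apply, smul_eq_mul, add_eq_zero,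
          mul_eq_zero] at h0
        exact h0.1.resolve_left hc
      have herg₀ : Ergodic ⇑e₀ μ₀ := by rw [he₀]; exact hμ₀erg
      have hνAeq : μA.map π = μ₀ := by
        refine ergodic_unique_abs_cont e₀ herg₀ ?_ (hACnu (μ s) _ _ h1' hsplit)
        rw [he₀]; exact htrans μA hAT
      have hνBeq : μB.map π = μ₀ := by
        refine ergodic_unique_abs_cont e₀ herg₀ ?_
          (hACnu (μ sᶜ) _ _ h2' (by rw [add_comm] at hsplit; exact hsplit))
        rw [he₀]; exact htrans μB hBT
      obtain ⟨hA_eq, _⟩ := H μA ⟨hAp, hAT, hνAeq⟩ μB ⟨hBp, hBT, hνBeq⟩ (μ s) (μ sᶜ)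
        (zero_lt_iff.mpr h1') (zero_lt_iff.mpr h2') hab hsum.symm
      have hμAs : μA s = 1 := by
        rw [hμA, Measure.smul_apply, Measure.restrict_apply hs, Set.inter_self, smul_eq_mul]
        exact ENNReal.inv_mul_cancel h1' haT
      rw [hA_eq] at hμAs
      -- now μ s = 1, so μ sᶜ = 0, contradiction
      apply h2'
      rw [hμAs] at hab
      exact (ENNReal.add_right_inj ENNReal.one_ne_top).mp (by rw [hab, add_zero])
end

section
/- In the group-extension setting, let μ₀ ∈ M(T₀). Then: (1) if ν ∈ M(T₂) and μ ∈ M(T₁, μ₀), the convolution ν*μ (the pushforward of ν×μ under (y,x) ↦ yx) lies in M(T₁, μ₀); (2) if μ ∈ M(T₁, μ₀), then m*μ = μ₀', where m is the normalized Haar measure on G₂. -/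
open MeasureTheory Filter
open scoped ENNReal

/-- The convolution of a measure `ν` on the acting group `G₂` with a measure `μ` on `G₁`:
the pushforward of `ν × μ` under `(y, x) ↦ y * x`. -/
noncomputable def subgroupConv {G₁ : Type*} [Group G₁] [MeasurableSpace G₁]
    (G₂ : Subgroup G₁) (ν : Measure G₂) (μ : Measure G₁) : Measure G₁ :=
  (ν.prod μ).map (fun p : G₂ × G₁ => (p.1 : G₁) * p.2)

/-- A Haar probability measure on a compact group is right invariant. -/
lemma haar_prob_map_mul_right {G : Type*} [Group G] [TopologicalSpace G] [IsTopologicalGroup G]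
    [CompactSpace G] [MeasurableSpace G] [BorelSpace G] (m : Measure G) [m.IsHaarMeasure]
    [IsProbabilityMeasure m] (g : G) : m.map (· * g) = m := by
  set μ2 := m.map (· * g) with hμ2
  haveI : IsProbabilityMeasure μ2 := Measure.isProbabilityMeasure_map (measurable_mul_const g).aemeasurable
  haveI : μ2.IsMulLeftInvariant := by
    constructor
    intro a
    rw [hμ2, Measure.map_map (measurable_const_mul a) (measurable_mul_const g),
      show ((a * ·) ∘ (· * g)) = ((· * g) ∘ (a * ·)) from funext fun x => (mul_assoc a x g).symm,
      ← Measure.map_map (measurable_mul_const g) (measurable_const_mul a),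
      MeasureTheory.map_mul_left_eq_self]
  have h := Measure.isMulInvariant_eq_smul_of_compactSpace μ2 m
  have huniv := congrArg (fun ρ : Measure G => ρ Set.univ) h
  simp only [measure_univ, Measure.smul_apply, smul_eq_mul, mul_one] at huniv
  rw [h]
  rw [ENNReal.smul_def] at huniv ⊢
  simp only [smul_eq_mul, mul_one] at huniv
  rw [← huniv, one_smul]

/-- Lemma 3.4: in the group-extension setting, for `μ₀ ∈ M(T₀)`:
(1) if `ν ∈ M(T₂)` and `μ ∈ M(T₁, μ₀)` then `ν * μ ∈ M(T₁, μ₀)`;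
(2) if `μ ∈ M(T₁, μ₀)` then `m * μ = μ₀'`, the Haar extension of `μ₀`. -/
theorem subgroupConv_mem_and_haar_conv_eq {G₁ : Type*} [Group G₁]
    [TopologicalSpace G₁] [IsTopologicalGroup G₁] [CompactSpace G₁]
    [TopologicalSpace.MetrizableSpace G₁] [MeasurableSpace G₁] [BorelSpace G₁]
    (G₂ : Subgroup G₁) [G₂.Normal] (hG₂closed : IsClosed (G₂ : Set G₁))
    (m : Measure G₂) [m.IsHaarMeasure] [IsProbabilityMeasure m]
    (T₁ : G₁ ≃ₜ G₁) (T₂ : G₂ ≃* G₂) (hT₂cont : Continuous T₂)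
    (hcomm : ∀ (y : G₂) (x : G₁), T₁ ((y : G₁) * x) = (T₂ y : G₁) * T₁ x)
    (T₀ : G₁ ⧸ G₂ → G₁ ⧸ G₂)
    (hT₀ : ∀ x : G₁, T₀ (QuotientGroup.mk x) = QuotientGroup.mk (T₁ x))
    (μ₀ : Measure (G₁ ⧸ G₂)) [IsProbabilityMeasure μ₀] (hμ₀ : μ₀.map T₀ = μ₀)
    (μ₀' : Measure G₁) [IsProbabilityMeasure μ₀']
    (hext : ∀ f : C(G₁, ℝ), ∫ x, f x ∂μ₀' =
      ∫ z : G₁ ⧸ G₂, ∫ y : G₂, f ((y : G₁) * Quotient.out z) ∂m ∂μ₀) :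
    (∀ ν : Measure G₂, IsProbabilityMeasure ν → ν.map (⇑T₂) = ν →
      ∀ μ ∈ MInvProj (⇑T₁) (QuotientGroup.mk (s := G₂)) μ₀,
        subgroupConv G₂ ν μ ∈ MInvProj (⇑T₁) (QuotientGroup.mk (s := G₂)) μ₀) ∧
    (∀ μ ∈ MInvProj (⇑T₁) (QuotientGroup.mk (s := G₂)) μ₀,
      subgroupConv G₂ m μ = μ₀') := by
  haveI : CompactSpace G₂ := isCompact_iff_compactSpace.mp hG₂closed.isCompact
  haveI : BorelSpace G₂ := Subtype.borelSpace (G₂ : Set G₁)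
  haveI : SecondCountableTopology G₁ := by
    letI := TopologicalSpace.metrizableSpaceMetric G₁
    infer_instance
  have hπc : Continuous (fun p : G₂ × G₁ => (p.1 : G₁) * p.2) :=
    (continuous_subtype_val.comp continuous_fst).mul continuous_snd
  have hπ : Measurable (fun p : G₂ × G₁ => (p.1 : G₁) * p.2) := hπc.measurable
  have hmkquot : ∀ (y : G₂) (x : G₁),
      QuotientGroup.mk ((y : G₁) * x) = (QuotientGroup.mk x : G₁ ⧸ G₂) := by
    intro y x
    rw [QuotientGroup.eq]
    have h : ((y : G₁) * x)⁻¹ * x = x⁻¹ * (y : G₁)⁻¹ * x := by group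
    rw [h]
    exact (inferInstance : G₂.Normal).conj_mem' _ (G₂.inv_mem y.2) x
  constructor
  · -- part (1)
    intro ν hνp hν μ hμ
    obtain ⟨hμp, hμT, hμφ⟩ := hμ
    haveI := hνp; haveI := hμp
    refine ⟨Measure.isProbabilityMeasure_map hπ.aemeasurable, ?_, ?_⟩
    · rw [subgroupConv, Measure.map_map T₁.continuous.measurable hπ]
      have h : (⇑T₁ ∘ fun p : G₂ × G₁ => (p.1 : G₁) * p.2)
          = (fun p : G₂ × G₁ => (p.1 : G₁) * p.2) ∘ (Prod.map ⇑T₂ ⇑T₁) := by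
        funext p; exact hcomm p.1 p.2
      rw [h, ← Measure.map_map hπ (hT₂cont.measurable.prodMap T₁.continuous.measurable),
        ← Measure.map_prod_map _ _ hT₂cont.measurable T₁.continuous.measurable, hν, hμT]
    · rw [subgroupConv, Measure.map_map QuotientGroup.measurable_coe hπ]
      have h : ((QuotientGroup.mk : G₁ → G₁ ⧸ G₂) ∘ fun p : G₂ × G₁ => (p.1 : G₁) * p.2)
          = (QuotientGroup.mk : G₁ → G₁ ⧸ G₂) ∘ (Prod.snd) := by
        funext p; exact hmkquot p.1 p.2
      rw [h, ← Measure.map_map QuotientGroup.measurable_coe measurable_snd,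
        Measure.map_snd_prod, measure_univ, one_smul, hμφ]
  · -- part (2)
    intro μ hμ
    obtain ⟨hμp, hμT, hμφ⟩ := hμ
    haveI := hμp
    haveI : IsProbabilityMeasure (subgroupConv G₂ m μ) := by
      rw [subgroupConv]; exact Measure.isProbabilityMeasure_map hπ.aemeasurable
    -- integrals of continuous functions agree
    have key : ∀ f : C(G₁, ℝ), ∫ x, f x ∂(subgroupConv G₂ m μ) = ∫ x, f x ∂μ₀' := by
      intro f
      set F : G₁ → ℝ := fun x => ∫ y : G₂, f ((y : G₁) * x) ∂m with hF
      have hfc : Continuous fun p : G₂ × G₁ => f ((p.1 : G₁) * p.2) := f.continuous.comp hπc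
      have hfint : Integrable (fun p : G₂ × G₁ => f ((p.1 : G₁) * p.2)) (m.prod μ) :=
        hfc.integrable_of_hasCompactSupport (HasCompactSupport.of_compactSpace _)
      have hFm : StronglyMeasurable F := by
        have h : StronglyMeasurable fun p : G₁ × G₂ => f ((p.2 : G₁) * p.1) :=
          (f.continuous.comp
            ((continuous_subtype_val.comp continuous_snd).mul continuous_fst)).stronglyMeasurable
        exact h.integral_prod_right'
      have hFinv : ∀ (g : G₂) (x : G₁), F ((g : G₁) * x) = F x := by
        intro g x
        have hh : Continuous (fun z : G₂ => f ((z : G₁) * x)) :=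
          f.continuous.comp (continuous_subtype_val.mul continuous_const)
        have h1 : F ((g : G₁) * x) = ∫ z : G₂, (fun z : G₂ => f ((z : G₁) * x)) (z * g) ∂m := by
          simp only [hF]
          congr 1
          funext y
          simp [mul_assoc]
        have h2 : ∫ z : G₂, (fun z : G₂ => f ((z : G₁) * x)) z
              ∂(m.map (· * g)) = ∫ z : G₂, (fun z : G₂ => f ((z : G₁) * x)) (z * g) ∂m :=
          integral_map (measurable_mul_const g).aemeasurable
            (by rw [haar_prob_map_mul_right]; exact hh.aestronglyMeasurable)
        rw [haar_prob_map_mul_right] at h2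
        exact h1.trans h2.symm
      have hFout : ∀ x : G₁, F (Quotient.out (QuotientGroup.mk (s := G₂) x)) = F x := by
        intro x
        set w := Quotient.out (QuotientGroup.mk (s := G₂) x) with hw
        have h1 : QuotientGroup.mk (s := G₂) w = QuotientGroup.mk x := Quotient.out_eq _
        rw [QuotientGroup.eq] at h1
        have hg : x⁻¹ * w ∈ G₂ := by
          have := G₂.inv_mem h1
          rwa [mul_inv_rev, inv_inv] at this
        have hg2 : x * (x⁻¹ * w) * x⁻¹ ∈ G₂ :=
          (inferInstance : G₂.Normal).conj_mem _ hg x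
        have hww : ((⟨x * (x⁻¹ * w) * x⁻¹, hg2⟩ : G₂) : G₁) * x = w := by
          show x * (x⁻¹ * w) * x⁻¹ * x = w
          group
        calc F w = F (((⟨x * (x⁻¹ * w) * x⁻¹, hg2⟩ : G₂) : G₁) * x) := by rw [hww]
          _ = F x := hFinv _ x
      have hFoutMeas : AEStronglyMeasurable (fun z : G₁ ⧸ G₂ => F (Quotient.out z))
          (μ.map (QuotientGroup.mk (s := G₂))) := by
        have h : Measurable fun z : G₁ ⧸ G₂ => F (Quotient.out z) := by
          rw [QuotientGroup.measurable_from_quotient]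
          have h2 : ((fun z : G₁ ⧸ G₂ => F (Quotient.out z)) ∘
              (QuotientGroup.mk (s := G₂))) = F := funext fun x => hFout x
          rw [h2]; exact hFm.measurable
        exact h.aestronglyMeasurable
      have step1 : ∫ x, f x ∂(subgroupConv G₂ m μ)
          = ∫ p : G₂ × G₁, f ((p.1 : G₁) * p.2) ∂(m.prod μ) := by
        rw [subgroupConv]
        exact integral_map hπ.aemeasurable f.continuous.aestronglyMeasurable
      have step2 : ∫ p : G₂ × G₁, f ((p.1 : G₁) * p.2) ∂(m.prod μ)
          = ∫ y : G₂, ∫ x : G₁, f ((y : G₁) * x) ∂μ ∂m := integral_prod _ hfint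
      have step3 : ∫ y : G₂, ∫ x : G₁, f ((y : G₁) * x) ∂μ ∂m
          = ∫ x : G₁, ∫ y : G₂, f ((y : G₁) * x) ∂m ∂μ :=
        integral_integral_swap (f := fun (y : G₂) (x : G₁) => f ((y : G₁) * x)) hfint
      have step4 : ∫ x : G₁, F x ∂μ = ∫ z : G₁ ⧸ G₂, F (Quotient.out z) ∂μ₀ := by
        rw [← hμφ, integral_map QuotientGroup.measurable_coe.aemeasurable hFoutMeas]
        exact integral_congr_ae (Eventually.of_forall fun x => (hFout x).symm)
      rw [step1, step2, step3]
      rw [show (∫ x : G₁, ∫ y : G₂, f ((y : G₁) * x) ∂m ∂μ) = ∫ x : G₁, F x ∂μ from rfl, step4,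
        hext f]
    -- conclude equality of measures
    apply ext_of_forall_lintegral_eq_of_IsFiniteMeasure
    intro f
    have hcont : Continuous fun x : G₁ => ((f x : NNReal) : ℝ) :=
      NNReal.continuous_coe.comp f.continuous
    have hint1 : Integrable (fun x : G₁ => ((f x : NNReal) : ℝ)) (subgroupConv G₂ m μ) :=
      hcont.integrable_of_hasCompactSupport (HasCompactSupport.of_compactSpace _)
    have hint2 : Integrable (fun x : G₁ => ((f x : NNReal) : ℝ)) μ₀' :=
      hcont.integrable_of_hasCompactSupport (HasCompactSupport.of_compactSpace _)
    have hkey := key ⟨fun x => ((f x : NNReal) : ℝ), hcont⟩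
    simp only [ContinuousMap.coe_mk] at hkey
    rw [lintegral_coe_eq_integral _ hint1, lintegral_coe_eq_integral _ hint2, hkey]
end

section
/- In the group-extension setting with maps π, π₁ : G₂×G₁ → G₂×G₁ components π(y,x) = yx and π₁(y,x) = y, set B₁ = π₁⁻¹(ℱ) and B_c = π⁻¹(𝔅), where ℱ, 𝔅 are the Borel σ-algebras of G₂, G₁. Let μ₀ ∈ M(T₀) and μ ∈ M(T₁, μ₀). Then B₁ and B_c are independent with respect to the product measure m×μ if and only if μ = μ₀'. -/
open MeasureTheory Filter
open scoped ENNReal NNReal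

/-- Two finite Borel measures on a pseudo-metrizable space agreeing on integrals of
continuous real-valued functions are equal. -/
lemma measure_ext_of_integral_continuous {Ω : Type*} [MeasurableSpace Ω] [TopologicalSpace Ω]
    [TopologicalSpace.PseudoMetrizableSpace Ω] [BorelSpace Ω]
    {μ ν : Measure Ω} [IsFiniteMeasure μ] [IsFiniteMeasure ν]
    (h : ∀ f : C(Ω, ℝ), ∫ x, f x ∂μ = ∫ x, f x ∂ν) : μ = ν := by
  apply ext_of_forall_lintegral_eq_of_IsFiniteMeasure
  intro f
  have h' := h ⟨fun x => (f x : ℝ), NNReal.continuous_coe.comp f.continuous⟩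
  simp only [ContinuousMap.coe_mk] at h'
  have h1 := BoundedContinuousFunction.toReal_lintegral_coe_eq_integral f μ
  have h2 := BoundedContinuousFunction.toReal_lintegral_coe_eq_integral f ν
  have hfin1 := (BoundedContinuousFunction.lintegral_lt_top_of_nnreal μ f).ne
  have hfin2 := (BoundedContinuousFunction.lintegral_lt_top_of_nnreal ν f).ne
  exact (ENNReal.toReal_eq_toReal_iff' hfin1 hfin2).mp (by rw [h1, h2]; exact h')

/-- The normalized Haar measure on a compact group is right invariant. -/
lemma haar_isMulRightInvariant {G : Type*} [Group G] [TopologicalSpace G] [IsTopologicalGroup G]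
    [CompactSpace G] [MeasurableSpace G] [BorelSpace G]
    (m : Measure G) [m.IsHaarMeasure] [IsProbabilityMeasure m] :
    m.IsMulRightInvariant := by
  constructor
  intro g
  haveI : IsProbabilityMeasure (Measure.map (· * g) m) :=
    Measure.isProbabilityMeasure_map (measurable_mul_const g).aemeasurable
  haveI : (Measure.map (· * g) m).IsOpenPosMeasure :=
    (continuous_mul_right g).isOpenPosMeasure_map (Homeomorph.mulRight g).surjective
  haveI : (Measure.map (· * g) m).IsHaarMeasure :=
    { toIsFiniteMeasureOnCompacts := inferInstance
      toIsMulLeftInvariant := inferInstance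
      toIsOpenPosMeasure := inferInstance }
  exact Measure.isHaarMeasure_eq_of_isProbabilityMeasure _ m

/-- Lemma 3.12: in the group-extension setting, for `μ ∈ M(T₁, μ₀)`, the σ-algebras
`B₁ = π₁⁻¹(ℱ)` and `B_c = π⁻¹(𝔅)` on `G₂ × G₁` (where `π₁(y,x) = y`, `π(y,x) = y·x`)
are independent with respect to `m × μ` if and only if `μ = μ₀'`, the Haar extension
of `μ₀`. -/
theorem indep_iff_eq_haarExtension {G₁ : Type*} [Group G₁]
    [TopologicalSpace G₁] [IsTopologicalGroup G₁] [CompactSpace G₁]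
    [TopologicalSpace.MetrizableSpace G₁] [MeasurableSpace G₁] [BorelSpace G₁]
    (G₂ : Subgroup G₁) [G₂.Normal] (hG₂closed : IsClosed (G₂ : Set G₁))
    (m : Measure G₂) [m.IsHaarMeasure] [IsProbabilityMeasure m]
    (T₁ : G₁ ≃ₜ G₁) (T₂ : G₂ ≃* G₂) (hT₂cont : Continuous T₂)
    (hcomm : ∀ (y : G₂) (x : G₁), T₁ ((y : G₁) * x) = (T₂ y : G₁) * T₁ x)
    (T₀ : G₁ ⧸ G₂ → G₁ ⧸ G₂)
    (hT₀ : ∀ x : G₁, T₀ (QuotientGroup.mk x) = QuotientGroup.mk (T₁ x))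
    (μ₀ : Measure (G₁ ⧸ G₂)) [IsProbabilityMeasure μ₀] (hμ₀ : μ₀.map T₀ = μ₀)
    (μ₀' : Measure G₁) [IsProbabilityMeasure μ₀']
    (hext : ∀ f : C(G₁, ℝ), ∫ x, f x ∂μ₀' =
      ∫ z : G₁ ⧸ G₂, ∫ y : G₂, f ((y : G₁) * Quotient.out z) ∂m ∂μ₀)
    (μ : Measure G₁) (hμ : μ ∈ MInvProj (⇑T₁) (QuotientGroup.mk (s := G₂)) μ₀) :
    (∀ A B : Set (G₂ × G₁),
      MeasurableSet[MeasurableSpace.comap (fun p : G₂ × G₁ => p.1)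
        (inferInstance : MeasurableSpace G₂)] A →
      MeasurableSet[MeasurableSpace.comap (fun p : G₂ × G₁ => (p.1 : G₁) * p.2)
        (inferInstance : MeasurableSpace G₁)] B →
      (m.prod μ) (A ∩ B) = (m.prod μ) A * (m.prod μ) B) ↔ μ = μ₀' := by
  obtain ⟨hμprob, _hμT, hμproj⟩ := hμ
  haveI := hμprob
  haveI : CompactSpace G₂ := isCompact_iff_compactSpace.mp hG₂closed.isCompact
  haveI : BorelSpace G₂ := Subtype.borelSpace (G₂ : Set G₁)
  haveI : TopologicalSpace.PseudoMetrizableSpace G₂ :=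
    TopologicalSpace.PseudoMetrizableSpace.subtype (G₂ : Set G₁)
  haveI : m.IsMulRightInvariant := haar_isMulRightInvariant m
  set π : G₂ × G₁ → G₁ := fun p => (p.1 : G₁) * p.2 with hπdef
  have hπc : Continuous π := (continuous_subtype_val.comp continuous_fst).mul continuous_snd
  have hπ : Measurable π := hπc.measurable
  have hLmeas : ∀ y : G₂, Measurable fun x : G₁ => (y : G₁) * x :=
    fun y => measurable_const_mul _
  -- the Haar extension is `G₂`-invariant
  have hμ₀'inv : ∀ g : G₂, μ₀'.map (fun x => (g : G₁) * x) = μ₀' := by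
    intro g
    haveI : IsProbabilityMeasure (μ₀'.map (fun x => (g : G₁) * x)) :=
      Measure.isProbabilityMeasure_map (hLmeas g).aemeasurable
    apply measure_ext_of_integral_continuous
    intro f
    rw [integral_map (hLmeas g).aemeasurable f.continuous.measurable.aestronglyMeasurable]
    have h1 := hext ⟨fun x => f ((g : G₁) * x),
      f.continuous.comp (continuous_const.mul continuous_id)⟩
    simp only [ContinuousMap.coe_mk] at h1
    rw [h1, hext f]
    refine integral_congr_ae (Eventually.of_forall fun z => ?_)
    have hassoc : ∀ y : G₂, (g : G₁) * ((y : G₁) * Quotient.out z)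
        = ((g * y : G₂) : G₁) * Quotient.out z := by
      intro y
      simp [mul_assoc]
    simp_rw [hassoc]
    exact integral_mul_left_eq_self (fun w : G₂ => f ((w : G₁) * Quotient.out z)) g
  -- uniqueness of G₂-invariant lifts of μ₀
  have huniq : ∀ ν : Measure G₁, IsProbabilityMeasure ν →
      ν.map (QuotientGroup.mk (s := G₂)) = μ₀ →
      (∀ g : G₂, ν.map (fun x => (g : G₁) * x) = ν) → ν = μ₀' := by
    intro ν hνprob hνproj hνinv
    haveI := hνprob
    apply measure_ext_of_integral_continuous
    intro f
    set Hq : G₁ ⧸ G₂ → ℝ := fun z => ∫ y : G₂, f ((y : G₁) * Quotient.out z) ∂m with hHqdef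
    have hcoset : ∀ x : G₁, ∫ y : G₂, f ((y : G₁) * x) ∂m
        = Hq (QuotientGroup.mk x) := by
      intro x
      obtain ⟨g0, hg0⟩ := QuotientGroup.mk_out_eq_mul G₂ x
      have hx : Quotient.out (QuotientGroup.mk (s := G₂) x) * (g0 : G₁)⁻¹ = x := by
        rw [hg0, mul_inv_cancel_right]
      have hmem : Quotient.out (QuotientGroup.mk (s := G₂) x) * (g0 : G₁)⁻¹ *
          (Quotient.out (QuotientGroup.mk (s := G₂) x))⁻¹ ∈ G₂ :=
        Subgroup.Normal.conj_mem ‹G₂.Normal› _ (G₂.inv_mem g0.2) _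
      have hyx : ∀ y : G₂, (y : G₁) * x
          = ((y * (⟨_, hmem⟩ : G₂) : G₂) : G₁) * Quotient.out (QuotientGroup.mk (s := G₂) x) := by
        intro y
        rw [Subgroup.coe_mul]
        show (y : G₁) * x = ((y : G₁) * (Quotient.out (QuotientGroup.mk (s := G₂) x) *
          (g0 : G₁)⁻¹ * (Quotient.out (QuotientGroup.mk (s := G₂) x))⁻¹)) *
          Quotient.out (QuotientGroup.mk (s := G₂) x)
        conv_lhs => rw [← hx]
        group
      calc ∫ y : G₂, f ((y : G₁) * x) ∂m
          = ∫ y : G₂, f (((y * (⟨_, hmem⟩ : G₂) : G₂) : G₁) *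
              Quotient.out (QuotientGroup.mk (s := G₂) x)) ∂m := by
            exact integral_congr_ae (Eventually.of_forall fun y => congrArg f (hyx y))
        _ = ∫ y : G₂, f ((y : G₁) * Quotient.out (QuotientGroup.mk (s := G₂) x)) ∂m :=
            integral_mul_right_eq_self
              (fun w : G₂ => f ((w : G₁) * Quotient.out (QuotientGroup.mk (s := G₂) x))) _
        _ = Hq (QuotientGroup.mk x) := rfl
    have hFmeas : StronglyMeasurable fun x : G₁ => ∫ y : G₂, f ((y : G₁) * x) ∂m := by
      have hc : Continuous fun p : G₁ × G₂ => f ((p.2 : G₁) * p.1) :=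
        f.continuous.comp ((continuous_subtype_val.comp continuous_snd).mul continuous_fst)
      exact hc.stronglyMeasurable.integral_prod_right'
    have hHqmeas : Measurable Hq := by
      rw [QuotientGroup.measurable_from_quotient]
      have : (Hq ∘ QuotientGroup.mk (s := G₂))
          = fun x : G₁ => ∫ y : G₂, f ((y : G₁) * x) ∂m := by
        funext x; exact (hcoset x).symm
      rw [this]
      exact hFmeas.measurable
    have hint : Integrable (Function.uncurry fun (y : G₂) (x : G₁) => f ((y : G₁) * x))
        (m.prod ν) := by
      apply Continuous.integrable_of_hasCompactSupport
      · exact f.continuous.comp ((continuous_subtype_val.comp continuous_fst).mul continuous_snd)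
      · exact IsCompact.of_isClosed_subset isCompact_univ (isClosed_tsupport _) (Set.subset_univ _)
    have hνinv' : ∀ y : G₂, ∫ x, f ((y : G₁) * x) ∂ν = ∫ x, f x ∂ν := by
      intro y
      conv_rhs => rw [← hνinv y]
      rw [integral_map (hLmeas y).aemeasurable f.continuous.measurable.aestronglyMeasurable]
    calc ∫ x, f x ∂ν
        = ∫ y : G₂, ∫ x, f ((y : G₁) * x) ∂ν ∂m := by
          simp [hνinv', measure_univ]
      _ = ∫ x, ∫ y : G₂, f ((y : G₁) * x) ∂m ∂ν := integral_integral_swap hint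
      _ = ∫ x, Hq (QuotientGroup.mk x) ∂ν := by simp_rw [hcoset]
      _ = ∫ z, Hq z ∂(ν.map (QuotientGroup.mk (s := G₂))) :=
          (integral_map QuotientGroup.measurable_coe.aemeasurable
            hHqmeas.aestronglyMeasurable).symm
      _ = ∫ z, Hq z ∂μ₀ := by rw [hνproj]
      _ = ∫ x, f x ∂μ₀' := (hext f).symm
  -- basic computation of the product measure on rectangles of the two σ-algebras
  have key : ∀ (F : Set G₂), MeasurableSet F → ∀ (E : Set G₁), MeasurableSet E →
      (m.prod μ) ((fun p : G₂ × G₁ => p.1) ⁻¹' F ∩ π ⁻¹' E)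
        = ∫⁻ y in F, μ ((fun x => (y : G₁) * x) ⁻¹' E) ∂m := by
    intro F hF E hE
    rw [Measure.prod_apply ((measurable_fst hF).inter (hπ hE)),
      ← lintegral_indicator hF]
    refine lintegral_congr fun y => ?_
    by_cases hy : y ∈ F
    · rw [Set.indicator_of_mem hy]
      congr 1
      ext x
      simp [π, hy]
    · rw [Set.indicator_of_notMem hy]
      have : Prod.mk y ⁻¹' ((fun p : G₂ × G₁ => p.1) ⁻¹' F ∩ π ⁻¹' E) = ∅ := by
        ext x; simp [π, hy]
      rw [this, measure_empty]
  have hAeq : ∀ {F : Set G₂}, MeasurableSet F →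
      (m.prod μ) ((fun p : G₂ × G₁ => p.1) ⁻¹' F) = m F := by
    intro F hF
    rw [← Set.prod_univ, Measure.prod_prod, measure_univ, mul_one]
  constructor
  · -- independence implies `μ = μ₀'`
    intro hInd
    set ν : Measure G₁ := (m.prod μ).map π with hνdef
    haveI : IsProbabilityMeasure ν := Measure.isProbabilityMeasure_map hπ.aemeasurable
    have hBeq : ∀ {E : Set G₁}, MeasurableSet E → (m.prod μ) (π ⁻¹' E) = ν E := by
      intro E hE; rw [hνdef, Measure.map_apply hπ hE]
    have hconst : ∀ (F : Set G₂), MeasurableSet F → ∀ (E : Set G₁), MeasurableSet E →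
        ∫⁻ y in F, μ ((fun x => (y : G₁) * x) ⁻¹' E) ∂m = m F * ν E := by
      intro F hF E hE
      rw [← key F hF E hE, hInd _ _ ⟨F, hF, rfl⟩ ⟨E, hE, rfl⟩, hAeq hF, hBeq hE]
    have hres : ∀ (F : Set G₂), MeasurableSet F →
        ((m.restrict F).prod μ).map π = (m F) • ν := by
      intro F hF
      ext E hE
      rw [Measure.map_apply hπ hE, Measure.prod_apply (hπ hE), Measure.smul_apply,
        smul_eq_mul, ← hconst F hF E hE]
      rfl
    have hμν : μ = ν := by
      apply ext_of_forall_lintegral_eq_of_IsFiniteMeasure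
      intro f
      set c : ℝ≥0∞ := ∫⁻ x, (f x : ℝ≥0∞) ∂ν with hc
      set φ : G₂ → ℝ≥0∞ := fun y => ∫⁻ x, (f ((y : G₁) * x) : ℝ≥0∞) ∂μ with hφ
      have hfm : Measurable fun x : G₁ => (f x : ℝ≥0∞) :=
        measurable_coe_nnreal_ennreal.comp f.continuous.measurable
      have hφint : ∀ (F : Set G₂), MeasurableSet F → ∫⁻ y in F, φ y ∂m = m F * c := by
        intro F hF
        have h1 : ∫⁻ y in F, φ y ∂m
            = ∫⁻ p, (f (π p) : ℝ≥0∞) ∂((m.restrict F).prod μ) :=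
          (lintegral_prod _ (hfm.comp hπ).aemeasurable).symm
        rw [h1, ← lintegral_map hfm hπ, hres F hF, lintegral_smul_measure, smul_eq_mul]
      have hφcont : Continuous φ := by
        rw [continuous_iff_continuousAt]
        intro y₀
        refine tendsto_lintegral_filter_of_dominated_convergence
          (fun _ => (nndist f 0 : ℝ≥0∞)) ?_ ?_ ?_ ?_
        · exact Eventually.of_forall fun y =>
            measurable_coe_nnreal_ennreal.comp (f.continuous.measurable.comp (hLmeas y))
        · exact Eventually.of_forall fun y => ae_of_all _ fun x =>
            ENNReal.coe_le_coe.mpr (BoundedContinuousFunction.NNReal.upper_bound f _)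
        · rw [lintegral_const]
          exact ENNReal.mul_ne_top ENNReal.coe_ne_top (by simp)
        · refine ae_of_all _ fun x => ?_
          have hc2 : Continuous fun y : G₂ => (f ((y : G₁) * x) : ℝ≥0∞) :=
            ENNReal.continuous_coe.comp
              (f.continuous.comp (continuous_subtype_val.mul continuous_const))
          exact hc2.continuousAt
      have hφae : φ =ᵐ[m] fun _ => c := by
        refine ae_eq_of_forall_setLIntegral_eq_of_sigmaFinite hφcont.measurable
          measurable_const ?_
        intro s hs _
        rw [hφint s hs, setLIntegral_const, mul_comm]
      have hφeq : φ = fun _ => c := (Continuous.ae_eq_iff_eq m hφcont continuous_const).mp hφae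
      have h1 : φ 1 = c := congrFun hφeq 1
      simpa [hφ] using h1
    have hνinv : ∀ g : G₂, ν.map (fun x => (g : G₁) * x) = ν := by
      intro g
      have hPm : Measurable (Prod.map (fun y : G₂ => g * y) (id : G₁ → G₁)) :=
        Measurable.prodMap (measurable_const_mul g) measurable_id
      conv_lhs => rw [hνdef]
      rw [Measure.map_map (hLmeas g) hπ]
      have hcomp : (fun x => (g : G₁) * x) ∘ π
          = π ∘ (Prod.map (fun y : G₂ => g * y) (id : G₁ → G₁)) := by
        funext p
        simp [π, Prod.map, mul_assoc]
      rw [hcomp, ← Measure.map_map hπ hPm,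
        ← Measure.map_prod_map _ _ (measurable_const_mul g) measurable_id,
        map_mul_left_eq_self m g, Measure.map_id]
    have hνproj : ν.map (QuotientGroup.mk (s := G₂)) = μ₀ := by
      rw [hνdef, Measure.map_map QuotientGroup.measurable_coe hπ]
      have hcomp : (QuotientGroup.mk (s := G₂)) ∘ π
          = (QuotientGroup.mk (s := G₂)) ∘ (Prod.snd : G₂ × G₁ → G₁) := by
        funext p
        simp only [Function.comp_apply, π]
        have hrw : (p.1 : G₁) * p.2 = p.2 * (p.2⁻¹ * (p.1 : G₁) * p.2) := by group
        rw [hrw, QuotientGroup.mk_mul_of_mem]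
        exact Subgroup.Normal.conj_mem' ‹G₂.Normal› _ p.1.2 p.2
      rw [hcomp, ← Measure.map_map QuotientGroup.measurable_coe measurable_snd,
        Measure.map_snd_prod, measure_univ, one_smul, hμproj]
    rw [hμν]
    exact huniq ν inferInstance hνproj hνinv
  · -- `μ = μ₀'` implies independence
    intro hμeq A B hA hB
    obtain ⟨F, hF, rfl⟩ := hA
    obtain ⟨E, hE, rfl⟩ := hB
    have hinv : ∀ y : G₂, μ ((fun x => (y : G₁) * x) ⁻¹' E) = μ E := by
      intro y
      rw [hμeq, ← Measure.map_apply (hLmeas y) hE, hμ₀'inv y]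
    have hB' : (m.prod μ) (π ⁻¹' E) = μ E := by
      have h0 : π ⁻¹' E = (fun p : G₂ × G₁ => p.1) ⁻¹' (Set.univ : Set G₂) ∩ π ⁻¹' E := by
        simp
      rw [h0, key Set.univ MeasurableSet.univ E hE]
      simp_rw [hinv]
      rw [setLIntegral_const, measure_univ, mul_one]
    have hA' : (m.prod μ) ((fun p : G₂ × G₁ => p.1) ⁻¹' F) = m F := hAeq hF
    rw [key F hF E hE]
    simp_rw [hinv]
    rw [setLIntegral_const, hA', hB', mul_comm]
end

section
/- Let G be a compact metrizable topological group and T : G → G a surjective continuous group homomorphism. If μ and ν are T-invariant ergodic Borel probability measures on G such that the dynamical systems (G, T, μ) and (G, T, ν) are disjoint, then the convolution μ*ν is ergodic with respect to T. -/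
open MeasureTheory Set
open scoped ENNReal

/-- If `μ` is ergodic for `T`, and `ρ` is a `T`-invariant probability measure that is
bounded by a multiple of `μ`, then `ρ = μ`. -/
lemma aux_ergodic_eq_of_le_smul {α : Type*} [MeasurableSpace α] {T : α → α} {μ ρ : Measure α}
    [IsProbabilityMeasure μ] [IsProbabilityMeasure ρ]
    (hμ : Ergodic T μ) (hρT : ρ.map T = ρ)
    (c : ℝ≥0∞) (hle : ρ ≤ c • μ) : ρ = μ := by
  have hTm : Measurable T := hμ.toMeasurePreserving.measurable
  have hac : ρ ≪ μ := (Measure.absolutelyContinuous_of_le hle).trans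
    (Measure.absolutelyContinuous_of_le_smul le_rfl)
  set f : α → ℝ≥0∞ := ρ.rnDeriv μ with hfdef
  have hf : Measurable f := Measure.measurable_rnDeriv ρ μ
  have hρd : μ.withDensity f = ρ := Measure.withDensity_rnDeriv_eq ρ μ hac
  have hρapp : ∀ S : Set α, MeasurableSet S → ρ S = ∫⁻ x in S, f x ∂μ := by
    intro S hS
    rw [← hρd, withDensity_apply f hS]
  set g : α → ℝ≥0∞ := fun x => 1 - f x with hgdef
  set h : α → ℝ≥0∞ := fun x => f x - 1 with hhdef
  have hg : Measurable g := measurable_const.sub hf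
  have hh : Measurable h := hf.sub measurable_const
  have hpoint : ∀ x, 1 + h x = f x + g x := by
    intro x
    rcases le_total (f x) 1 with hx | hx
    · simp only [hgdef, hhdef]
      rw [tsub_eq_zero_of_le hx, add_zero, add_tsub_cancel_of_le hx]
    · simp only [hgdef, hhdef]
      rw [tsub_eq_zero_of_le hx, add_zero, add_tsub_cancel_of_le hx]
  have key : ∀ S : Set α, MeasurableSet S →
      μ S + ∫⁻ x in S, h x ∂μ = ρ S + ∫⁻ x in S, g x ∂μ := by
    intro S hS
    have h1 : ∫⁻ x in S, (1 + h x) ∂μ = ∫⁻ x in S, (f x + g x) ∂μ :=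
      lintegral_congr fun x => hpoint x
    rwa [lintegral_add_left measurable_const, lintegral_add_left hf,
      setLIntegral_one, ← hρapp S hS] at h1
  set B : Set α := {x | f x < 1} with hBdef
  have hB : MeasurableSet B := measurableSet_lt hf measurable_const
  -- g vanishes off B, h vanishes on B
  have hgB : ∀ x, x ∉ B → g x = 0 := by
    intro x hx
    simp only [hBdef, mem_setOf_eq, not_lt] at hx
    simp only [hgdef]; exact tsub_eq_zero_of_le hx
  have hhB : ∀ x, x ∈ B → h x = 0 := by
    intro x hx
    simp only [hBdef, mem_setOf_eq] at hx
    simp only [hhdef]; exact tsub_eq_zero_of_le hx.le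
  have hgpos : ∀ x, x ∈ B → 0 < g x := by
    intro x hx
    simp only [hBdef, mem_setOf_eq] at hx
    simpa only [hgdef, tsub_pos_iff_lt] using hx
  -- integral of g over any set equals integral over intersection with B
  have hgsplit : ∀ S : Set α, ∫⁻ x in S, g x ∂μ = ∫⁻ x in S ∩ B, g x ∂μ := by
    intro S
    have : ∀ x, g x = B.indicator g x := by
      intro x
      by_cases hx : x ∈ B
      · rw [indicator_of_mem hx]
      · rw [indicator_of_notMem hx, hgB x hx]
    calc ∫⁻ x in S, g x ∂μ = ∫⁻ x in S, B.indicator g x ∂μ := lintegral_congr this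
      _ = ∫⁻ x in S ∩ B, g x ∂μ := by
          rw [lintegral_indicator hB, Measure.restrict_restrict hB, Set.inter_comm]
  -- zero integral of g over a subset of B implies null
  have hgnull : ∀ S : Set α, MeasurableSet S → S ⊆ B → ∫⁻ x in S, g x ∂μ = 0 → μ S = 0 := by
    intro S hS hSB hint
    have hae : g =ᵐ[μ.restrict S] 0 := (lintegral_eq_zero_iff hg).mp hint
    have hae' : ∀ᵐ x ∂μ, x ∈ S → g x = 0 := (ae_restrict_iff' hS).mp hae
    have : μ {x | ¬ (x ∈ S → g x = 0)} = 0 := hae'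
    refine measure_mono_null (fun x hx => ?_) this
    simp only [mem_setOf_eq, Classical.not_imp]
    exact ⟨hx, (hgpos x (hSB hx)).ne'⟩
  -- finiteness facts
  have hgfin : ∀ S : Set α, ∫⁻ x in S, g x ∂μ ≠ ∞ := by
    intro S
    have h1 : ∫⁻ x in S, g x ∂μ ≤ ∫⁻ x in S, 1 ∂μ :=
      lintegral_mono fun x => tsub_le_self
    exact (h1.trans_lt (by rw [setLIntegral_one]; exact measure_lt_top μ S)).ne
  -- B is almost invariant
  have hμB : μ (T ⁻¹' B) = μ B := hμ.toMeasurePreserving.measure_preimage hB.nullMeasurableSet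
  have hρB : ρ (T ⁻¹' B) = ρ B := by
    conv_rhs => rw [← hρT]
    rw [Measure.map_apply hTm hB]
  have keyB := key B hB
  have keyT := key (T ⁻¹' B) (hTm hB)
  rw [hμB, hρB] at keyT
  have hintB : ∫⁻ x in B, h x ∂μ = 0 := by
    rw [setLIntegral_congr_fun hB (fun x hx => hhB x hx), lintegral_zero]
  rw [hintB, add_zero] at keyB
  have hρBfin : ρ B ≠ ∞ := (measure_lt_top ρ B).ne
  have e1 : ∫⁻ x in B, g x ∂μ + ∫⁻ x in T ⁻¹' B, h x ∂μ = ∫⁻ x in T ⁻¹' B, g x ∂μ := by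
    rw [keyB] at keyT
    rw [← ENNReal.add_right_inj hρBfin, ← add_assoc]
    exact keyT
  have e2 : ∫⁻ x in T ⁻¹' B, g x ∂μ ≤ ∫⁻ x in B, g x ∂μ := by
    rw [hgsplit (T ⁻¹' B)]
    exact lintegral_mono_set inter_subset_right
  have e3 : ∫⁻ x in T ⁻¹' B, g x ∂μ = ∫⁻ x in B, g x ∂μ :=
    le_antisymm e2 (e1 ▸ self_le_add_right _ _)
  have hsplitB : ∫⁻ x in B, g x ∂μ
      = ∫⁻ x in B ∩ T ⁻¹' B, g x ∂μ + ∫⁻ x in B \ T ⁻¹' B, g x ∂μ := by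
    rw [← lintegral_union (hB.diff (hTm hB))
      (disjoint_sdiff_self_right.mono_left inter_subset_right), inter_union_diff]
  have hd1 : μ (B \ T ⁻¹' B) = 0 := by
    apply hgnull _ (hB.diff (hTm hB)) diff_subset
    have h4 : ∫⁻ x in B, g x ∂μ + ∫⁻ x in B \ T ⁻¹' B, g x ∂μ
        = ∫⁻ x in B, g x ∂μ + 0 := by
      rw [add_zero]
      conv_rhs => rw [hsplitB]
      congr 1
      rw [← e3, hgsplit (T ⁻¹' B), inter_comm]
    exact (ENNReal.add_right_inj (hgfin B)).mp h4
  have hd2 : μ (T ⁻¹' B \ B) = 0 := by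
    have h1 : μ (T ⁻¹' B ∩ B) + μ (T ⁻¹' B \ B) = μ (T ⁻¹' B) :=
      measure_inter_add_diff _ hB
    have h2 : μ (B ∩ T ⁻¹' B) + μ (B \ T ⁻¹' B) = μ B :=
      measure_inter_add_diff _ (hTm hB)
    rw [hd1, add_zero] at h2
    rw [hμB, ← h2, inter_comm] at h1
    exact (ENNReal.add_right_inj (measure_lt_top μ _).ne).mp (h1.trans (add_zero _).symm)
  have hBae : T ⁻¹' B =ᵐ[μ] B := ae_eq_set.mpr ⟨hd2, hd1⟩
  rcases hμ.quasiErgodic.ae_empty_or_univ₀ hB.nullMeasurableSet hBae with hB0 | hB1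
  · -- B is null : f ≥ 1 a.e., conclude f = 1 a.e.
    have hB0' : μ B = 0 := ae_eq_empty.mp hB0
    have hfge : ∀ᵐ x ∂μ, 1 ≤ f x := by
      rw [ae_iff]
      simp only [not_le]
      exact hB0'
    have hgzero : g =ᵐ[μ] 0 := by
      refine measure_mono_null (fun x hx => ?_) hB0'
      simp only [mem_setOf_eq] at hx ⊢
      by_contra hxB
      exact hx (hgB x hxB)
    have hintg : ∫⁻ x, g x ∂μ = 0 := lintegral_eq_zero_iff hg |>.mpr hgzero
    have keyU := key univ MeasurableSet.univ
    rw [Measure.restrict_univ] at keyU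
    rw [measure_univ, measure_univ, hintg, add_zero] at keyU
    have hinth : ∫⁻ x, h x ∂μ = 0 :=
      (ENNReal.add_right_inj ENNReal.one_ne_top).mp
        (keyU.trans (add_zero (1 : ℝ≥0∞)).symm)
    have hhzero : h =ᵐ[μ] 0 := (lintegral_eq_zero_iff hh).mp hinth
    have hfone : f =ᵐ[μ] 1 := by
      filter_upwards [hfge, hhzero] with x h1 h2
      simp only [hhdef, Pi.zero_apply] at h2
      exact le_antisymm (tsub_eq_zero_iff_le.mp h2) h1
    rw [← hρd, withDensity_congr_ae hfone, withDensity_one]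
  · -- B is conull : contradiction
    exfalso
    have hμB1 : μ B = 1 := by
      rw [measure_congr hB1, measure_univ]
    have hρBc : ρ Bᶜ = 0 := hac (ae_eq_univ.mp hB1)
    have hρB1 : ρ B = 1 := by
      have h5 := measure_add_measure_compl (μ := ρ) hB
      rwa [hρBc, add_zero, measure_univ] at h5
    rw [hμB1, hρB1] at keyB
    have hintg0 : ∫⁻ x in B, g x ∂μ = 0 :=
      (ENNReal.add_right_inj ENNReal.one_ne_top).mp
        (keyB.symm.trans (add_zero (1 : ℝ≥0∞)).symm)
    have := hgnull B hB subset_rfl hintg0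
    rw [hμB1] at this
    exact one_ne_zero this

/-- Theorem 4.1: let `T` be a surjective continuous group homomorphism of a compact
metrizable group `G`. If `μ` and `ν` are `T`-invariant ergodic Borel probability measures
such that the systems `(G, T, μ)` and `(G, T, ν)` are disjoint in the sense of Furstenberg
(the only `T×T`-invariant Borel probability measure on `G × G` with marginals `μ` and `ν`
is the product `μ × ν`), then the convolution `μ ∗ ν` is ergodic with respect to `T`. -/
theorem mconv_ergodic_of_disjoint {G : Type*} [Group G] [TopologicalSpace G]
    [IsTopologicalGroup G] [CompactSpace G] [TopologicalSpace.MetrizableSpace G]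
    [MeasurableSpace G] [BorelSpace G]
    (T : G → G) (hTcont : Continuous T) (hThom : ∀ x y : G, T (x * y) = T x * T y)
    (hTsurj : Function.Surjective T)
    (μ ν : Measure G) [IsProbabilityMeasure μ] [IsProbabilityMeasure ν]
    (hμerg : Ergodic T μ) (hνerg : Ergodic T ν)
    (hdisj : ∀ lam : Measure (G × G), IsProbabilityMeasure lam →
      lam.map (Prod.map T T) = lam → lam.map Prod.fst = μ → lam.map Prod.snd = ν →
      lam = μ.prod ν) :
    Ergodic T (μ.mconv ν) := by
  letI : MetricSpace G := TopologicalSpace.metrizableSpaceMetric G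
  haveI : SecondCountableTopology G := inferInstance
  have hTm : Measurable T := hTcont.measurable
  have hmul : Measurable (fun q : G × G => q.1 * q.2) := measurable_mul
  have hTTm : Measurable (Prod.map T T) := hTm.prodMap hTm
  have hTT : MeasurePreserving (Prod.map T T) (μ.prod ν) (μ.prod ν) :=
    hμerg.toMeasurePreserving.prod hνerg.toMeasurePreserving
  have hcomm : (fun q : G × G => q.1 * q.2) ∘ Prod.map T T
      = T ∘ fun q : G × G => q.1 * q.2 := by
    funext q
    simp [Prod.map, hThom]
  -- the product measure gives every (T×T)-invariant set measure 0 or 1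
  have hkey : ∀ A : Set (G × G), MeasurableSet A → Prod.map T T ⁻¹' A = A →
      (μ.prod ν) A = 0 ∨ (μ.prod ν) A = 1 := by
    intro A hA hAinv
    by_contra hcon
    push_neg at hcon
    obtain ⟨hp0, hp1⟩ := hcon
    set p : ℝ≥0∞ := (μ.prod ν) A with hpdef
    have hpfin : p ≠ ∞ := (measure_lt_top _ _).ne
    set lam : Measure (G × G) := p⁻¹ • (μ.prod ν).restrict A with hlamdef
    have hlam_apply : ∀ S : Set (G × G), MeasurableSet S →
        lam S = p⁻¹ * (μ.prod ν) (S ∩ A) := by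
      intro S hS
      rw [hlamdef, Measure.smul_apply, Measure.restrict_apply hS, smul_eq_mul]
    have hlamuniv : lam Set.univ = 1 := by
      rw [hlam_apply _ MeasurableSet.univ, Set.univ_inter, ← hpdef,
        ENNReal.inv_mul_cancel hp0 hpfin]
    haveI hlamprob : IsProbabilityMeasure lam := ⟨hlamuniv⟩
    -- lam is (T×T)-invariant
    have hres : ((μ.prod ν).restrict A).map (Prod.map T T) = (μ.prod ν).restrict A := by
      ext S hS
      rw [Measure.map_apply hTTm hS, Measure.restrict_apply (hTTm hS),
        Measure.restrict_apply hS]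
      have : Prod.map T T ⁻¹' S ∩ A = Prod.map T T ⁻¹' (S ∩ A) := by
        rw [Set.preimage_inter, hAinv]
      rw [this, hTT.measure_preimage (hS.inter hA).nullMeasurableSet]
    have hlamT : lam.map (Prod.map T T) = lam := by
      rw [hlamdef, Measure.map_smul, hres]
    -- marginals of lam
    have hmarg : ∀ (pr : G × G → G) (m : Measure G), Measurable pr →
        IsProbabilityMeasure m → Ergodic T m →
        (pr ∘ Prod.map T T = T ∘ pr) →
        (∀ S : Set G, MeasurableSet S → (μ.prod ν) (pr ⁻¹' S) = m S) →
        lam.map pr = m := by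
      intro pr m hprm hmprob hmerg hprcomm hprmeas
      haveI : IsProbabilityMeasure (lam.map pr) :=
        Measure.isProbabilityMeasure_map hprm.aemeasurable
      refine aux_ergodic_eq_of_le_smul hmerg ?_ p⁻¹ ?_
      · rw [Measure.map_map hTm hprm, ← hprcomm, ← Measure.map_map hprm hTTm, hlamT]
      · rw [Measure.le_iff]
        intro S hS
        rw [Measure.map_apply hprm hS, hlam_apply _ (hprm hS), Measure.smul_apply,
          smul_eq_mul]
        exact mul_le_mul_right ((measure_mono Set.inter_subset_left).trans
          (hprmeas S hS).le) _
    have hfst : lam.map Prod.fst = μ := by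
      refine hmarg Prod.fst μ measurable_fst inferInstance hμerg ?_ ?_
      · funext q; rfl
      · intro S hS
        have : (Prod.fst ⁻¹' S : Set (G × G)) = S ×ˢ Set.univ := by
          ext q; simp
        rw [this, Measure.prod_prod, measure_univ, mul_one]
    have hsnd : lam.map Prod.snd = ν := by
      refine hmarg Prod.snd ν measurable_snd inferInstance hνerg ?_ ?_
      · funext q; rfl
      · intro S hS
        have : (Prod.snd ⁻¹' S : Set (G × G)) = Set.univ ×ˢ S := by
          ext q; simp
        rw [this, Measure.prod_prod, measure_univ, one_mul]
    have hlameq : lam = μ.prod ν := hdisj lam hlamprob hlamT hfst hsnd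
    have : (1 : ℝ≥0∞) = p := by
      calc (1 : ℝ≥0∞) = lam A := by
            rw [hlam_apply A hA, Set.inter_self, ← hpdef, ENNReal.inv_mul_cancel hp0 hpfin]
        _ = (μ.prod ν) A := by rw [hlameq]
        _ = p := hpdef.symm
    exact hp1 this.symm
  -- now conclude
  constructor
  · -- measure preserving
    refine ⟨hTm, ?_⟩
    rw [Measure.mconv, Measure.map_map hTm hmul, ← hcomm, ← Measure.map_map hmul hTTm,
      hTT.map_eq]
  · -- pre-ergodic
    constructor
    intro E hE hTE
    set A : Set (G × G) := (fun q : G × G => q.1 * q.2) ⁻¹' E with hAdef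
    have hA : MeasurableSet A := hmul hE
    have hAinv : Prod.map T T ⁻¹' A = A := by
      rw [hAdef, ← Set.preimage_comp, hcomm, Set.preimage_comp, hTE]
    have hconvE : (μ.mconv ν) E = (μ.prod ν) A :=
      Measure.map_apply hmul hE
    have hconvEc : (μ.mconv ν) Eᶜ = (μ.prod ν) Aᶜ := by
      rw [Measure.mconv, Measure.map_apply hmul hE.compl, hAdef, Set.preimage_compl]
    refine Filter.eventuallyConst_set'.mpr ?_
    rcases hkey A hA hAinv with h0 | h1
    · left
      rw [ae_eq_empty, hconvE]
      exact h0
    · right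
      rw [ae_eq_univ, hconvEc, measure_compl hA (measure_lt_top _ _).ne, h1, measure_univ,
        tsub_self]
end
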